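/- arXiv:1304.6862 — 6 statements merged into one kernel-verified Lean document; each statement's English description precedes it below -/
import Mathlib

section
/- Let X be a set carrying an approach distance δ with ultrafilter convergence a, and suppose that for all 𝔛 ∈ U(U X), all x₀ ∈ X and all u, v ∈ ℝ≥0∞ one has max (u + v) (a (m_X 𝔛) x₀) ≥ ⨅_{𝔵 ∈ U X} ( max u (a 𝔵 x₀) + max v (Ū a 𝔛 𝔵) ). Then X is exponentiable in the category App of approach spaces and contractions. -/
open scoped ENNReal
open CategoryTheory

noncomputable section

/-- The extension `Ū r` of a numerical relation `r : X ⇸ Y` to ultrafilters: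
`Ū r (𝔵, 𝔶) = ⨆_{A ∈ 𝔵} ⨆_{B ∈ 𝔶} ⨅_{x ∈ A} ⨅_{y ∈ B} r x y`. -/
def uExt {X Y : Type*} (r : X → Y → ℝ≥0∞) (𝔵 : Ultrafilter X) (𝔶 : Ultrafilter Y) : ℝ≥0∞ :=
  ⨆ A ∈ 𝔵, ⨆ B ∈ 𝔶, ⨅ x ∈ A, ⨅ y ∈ B, r x y

/-- The multiplication `m_X : U (U X) → U X` of the ultrafilter monad:
`m_X 𝔛 = {A ⊆ X | {𝔞 ∈ U X | A ∈ 𝔞} ∈ 𝔛}`. -/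
def mU {X : Type*} (𝔛 : Ultrafilter (Ultrafilter X)) : Ultrafilter X :=
  𝔛.bind id

/-- `ξ : U [0,∞] → [0,∞]`, `ξ 𝔳 = ⨆_{A ∈ 𝔳} ⨅_{u ∈ A} u`. -/
def xi (𝔳 : Ultrafilter ℝ≥0∞) : ℝ≥0∞ :=
  ⨆ A ∈ 𝔳, ⨅ u ∈ A, u

/-- `δ : P X × X → [0,∞]` is an approach distance. -/
structure IsApproachDistance {X : Type*} (δ : Set X → X → ℝ≥0∞) : Prop where
  dist_singleton : ∀ x : X, δ {x} x = 0
  dist_empty : ∀ x : X, δ (∅ : Set X) x = ∞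
  dist_union : ∀ (A B : Set X) (x : X), δ (A ∪ B) x = min (δ A x) (δ B x)
  dist_closure : ∀ (A : Set X) (x : X) (ε : ℝ≥0∞), δ A x ≤ δ {y | δ A y ≤ ε} x + ε

/-- The ultrafilter convergence associated to a distance function `δ`:
`a 𝔵 x = ⨆_{A ∈ 𝔵} δ A x`. -/
def appConv {X : Type*} (δ : Set X → X → ℝ≥0∞) (𝔵 : Ultrafilter X) (x : X) : ℝ≥0∞ :=
  ⨆ A ∈ 𝔵, δ A x

/-- `f : X → Y` is a contraction with respect to convergences `a` and `b`:
`a 𝔵 x ≥ b (U f 𝔵) (f x)`. -/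
def IsContraction {X Y : Type*} (a : Ultrafilter X → X → ℝ≥0∞)
    (b : Ultrafilter Y → Y → ℝ≥0∞) (f : X → Y) : Prop :=
  ∀ (𝔵 : Ultrafilter X) (x : X), b (Ultrafilter.map f 𝔵) (f x) ≤ a 𝔵 x

/-- Objects of the category `App`: sets equipped with an approach distance. -/
structure AppSpace : Type 1 where
  carrier : Type
  dist : Set carrier → carrier → ℝ≥0∞
  isApproachDistance : IsApproachDistance dist

/-- The category `App` of approach spaces and contractions. -/
instance : Category AppSpace where
  Hom A B := {f : A.carrier → B.carrier //
    IsContraction (appConv A.dist) (appConv B.dist) f}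
  id A := ⟨fun x => x, fun 𝔵 x => by simp [Ultrafilter.map_id']⟩
  comp {A B C} f g := ⟨g.1 ∘ f.1, fun 𝔵 x => by
    calc appConv C.dist (Ultrafilter.map (g.1 ∘ f.1) 𝔵) (g.1 (f.1 x))
        = appConv C.dist (Ultrafilter.map g.1 (Ultrafilter.map f.1 𝔵)) (g.1 (f.1 x)) := by
          rw [Ultrafilter.map_map]
      _ ≤ appConv B.dist (Ultrafilter.map f.1 𝔵) (f.1 x) := g.2 _ _
      _ ≤ appConv A.dist 𝔵 x := f.2 𝔵 x⟩

/-- `p : P ⟶ A`, `q : P ⟶ B` exhibit `P` as a (cartesian) product of `A` and `B` in `App`. -/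
def IsProductCone {A B P : AppSpace} (p : P ⟶ A) (q : P ⟶ B) : Prop :=
  ∀ (W : AppSpace) (f : W ⟶ A) (g : W ⟶ B), ∃! h : W ⟶ P, h ≫ p = f ∧ h ≫ q = g

/-- An approach space `X` is exponentiable in `App` if the cartesian product functor
`(-) × X : App → App` (formalised as: some functor `F` equipped with natural projections
exhibiting each `F Z` as the product `Z × X`) has a right adjoint. -/
def AppExponentiable (X : AppSpace) : Prop :=
  ∃ (F R : AppSpace ⥤ AppSpace) (_ : F ⊣ R)
    (p : ∀ Z : AppSpace, F.obj Z ⟶ Z) (q : ∀ Z : AppSpace, F.obj Z ⟶ X),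
    (∀ Z : AppSpace, IsProductCone (p Z) (q Z)) ∧
    (∀ (Z W : AppSpace) (h : Z ⟶ W), F.map h ≫ p W = p Z ≫ h ∧ F.map h ≫ q W = q Z)

namespace AppExp
open Filter Set

variable {α β γ Y : Type*}

lemma mem_mU {𝔛 : Ultrafilter (Ultrafilter α)} {A : Set α} :
    A ∈ mU 𝔛 ↔ {𝔶 : Ultrafilter α | A ∈ 𝔶} ∈ 𝔛 := Iff.rfl

lemma eq_of_le_sets {𝔶 𝔷 : Ultrafilter α} (h : ∀ A ∈ 𝔶, A ∈ 𝔷) : 𝔶 = 𝔷 := by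
  have : (𝔷 : Filter α) ≤ (𝔶 : Filter α) := fun s hs => h s hs
  exact (Ultrafilter.coe_le_coe.mp this).symm

lemma mU_map (f : α → β) (𝒲 : Ultrafilter (Ultrafilter α)) :
    Ultrafilter.map f (mU 𝒲) = mU (Ultrafilter.map (Ultrafilter.map f) 𝒲) := by
  apply eq_of_le_sets
  intro A hA
  rw [Ultrafilter.mem_map] at hA
  rw [mem_mU] at hA ⊢
  rw [Ultrafilter.mem_map]
  convert hA using 1
  rfl

lemma map_congr {f g : α → β} {𝔵 : Ultrafilter α} (h : {x | f x = g x} ∈ 𝔵) :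
    Ultrafilter.map f 𝔵 = Ultrafilter.map g 𝔵 := by
  apply eq_of_le_sets
  intro A hA
  rw [Ultrafilter.mem_map] at hA ⊢
  filter_upwards [hA, h] with x hx hfg
  show g x ∈ A; rw [← hfg]; exact hx

lemma exists_ultrafilter_base {S : Set (Set α)}
    (hS : ∀ T ⊆ S, T.Finite → (⋂₀ T).Nonempty) :
    ∃ 𝔘 : Ultrafilter α, ∀ s ∈ S, s ∈ 𝔘 := by
  have : (Filter.generate S).NeBot := Filter.generate_neBot_iff.mpr hS
  obtain ⟨𝔘, h𝔘⟩ := Ultrafilter.exists_le (Filter.generate S)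
  exact ⟨𝔘, fun s hs => h𝔘 (Filter.mem_generate_of_mem hs)⟩



lemma exists_ultrafilter_directed {S : Set (Set α)} (hSne : S.Nonempty)
    (hdir : ∀ s ∈ S, ∀ t ∈ S, ∃ r ∈ S, r ⊆ s ∩ t) (hne : ∀ s ∈ S, s.Nonempty) :
    ∃ 𝔘 : Ultrafilter α, ∀ s ∈ S, s ∈ 𝔘 := by
  classical
  let F : Filter α :=
    { sets := {t | ∃ s ∈ S, s ⊆ t}
      univ_sets := ⟨hSne.choose, hSne.choose_spec, Set.subset_univ _⟩
      sets_of_superset := fun ⟨s, hs, hst⟩ h2 => ⟨s, hs, hst.trans h2⟩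
      inter_sets := fun ⟨s, hs, hst⟩ ⟨s', hs', hst'⟩ => by
        obtain ⟨r, hr, hrs⟩ := hdir s hs s' hs'
        exact ⟨r, hr, hrs.trans (Set.inter_subset_inter hst hst')⟩ }
  have : F.NeBot := by
    constructor
    intro hbot
    have : (∅ : Set α) ∈ F := by rw [hbot]; trivial
    obtain ⟨s, hs, hsub⟩ := this
    obtain ⟨x, hx⟩ := hne s hs
    exact hsub hx
  obtain ⟨𝔘, h𝔘⟩ := Ultrafilter.exists_le F
  exact ⟨𝔘, fun s hs => h𝔘 ⟨s, hs, Set.Subset.rfl⟩⟩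

lemma exists_lift_of_image_mem (f : α → β) (A : Set α) (𝔠 : Ultrafilter β) (h : f '' A ∈ 𝔠) :
    ∃ 𝔴 : Ultrafilter α, A ∈ 𝔴 ∧ Ultrafilter.map f 𝔴 = 𝔠 := by
  have hne : (Filter.comap f ↑𝔠 ⊓ Filter.principal A).NeBot := by
    rw [Filter.inf_principal_neBot_iff]
    intro U hU
    obtain ⟨B, hB, hBU⟩ := hU
    obtain ⟨b, hb1, hb2⟩ := Ultrafilter.nonempty_of_mem (𝔠.inter_mem hB h)
    obtain ⟨x, hxA, rfl⟩ := hb2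
    exact ⟨x, hBU hb1, hxA⟩
  obtain ⟨𝔴, h𝔴⟩ := Ultrafilter.exists_le (Filter.comap f ↑𝔠 ⊓ Filter.principal A)
  refine ⟨𝔴, h𝔴 (Filter.mem_inf_of_right (Filter.mem_principal_self A)), ?_⟩
  refine (eq_of_le_sets fun B hB => ?_).symm
  rw [Ultrafilter.mem_map]
  exact h𝔴 (Filter.mem_inf_of_left (Filter.preimage_mem_comap hB))

lemma exists_prod_lift {X : Type*} (φ : α → β) (𝔴 : Ultrafilter (β × X)) (𝔰 : Ultrafilter α)
    (h : Ultrafilter.map φ 𝔰 = Ultrafilter.map Prod.fst 𝔴) :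
    ∃ 𝔴' : Ultrafilter (α × X), Ultrafilter.map (Prod.map φ id) 𝔴' = 𝔴 ∧
      Ultrafilter.map Prod.fst 𝔴' = 𝔰 := by
  have hne : (Filter.comap (Prod.map φ id) (𝔴 : Filter (β × X)) ⊓ Filter.comap Prod.fst (𝔰 : Filter α)).NeBot := by
    rw [Filter.inf_neBot_iff]
    intro U hU V hV
    obtain ⟨M, hM, hMU⟩ := hU
    obtain ⟨D, hD, hDV⟩ := hV
    have himg : φ '' D ∈ Ultrafilter.map Prod.fst 𝔴 := by
      rw [← h, Ultrafilter.mem_map]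
      exact Filter.mem_of_superset hD (Set.subset_preimage_image φ D)
    rw [Ultrafilter.mem_map] at himg
    obtain ⟨⟨b, x⟩, hbx1, hbx2⟩ := Ultrafilter.nonempty_of_mem (𝔴.inter_mem himg hM)
    obtain ⟨a, haD, rfl⟩ := hbx1
    exact ⟨(a, x), hMU hbx2, hDV haD⟩
  obtain ⟨𝔴', h𝔴'⟩ := Ultrafilter.exists_le
    (Filter.comap (Prod.map φ id) (𝔴 : Filter (β × X)) ⊓ Filter.comap Prod.fst (𝔰 : Filter α))
  refine ⟨𝔴', (eq_of_le_sets fun B hB => ?_).symm, (eq_of_le_sets fun B hB => ?_).symm⟩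
  · rw [Ultrafilter.mem_map]
    exact h𝔴' (Filter.mem_inf_of_left (Filter.preimage_mem_comap hB))
  · rw [Ultrafilter.mem_map]
    exact h𝔴' (Filter.mem_inf_of_right (Filter.preimage_mem_comap hB))

lemma exists_bc (f : α → β) (𝔚 : Ultrafilter α) (𝔓 : Ultrafilter (Ultrafilter β))
    (h : Ultrafilter.map f 𝔚 = mU 𝔓) :
    ∃ 𝒲 : Ultrafilter (Ultrafilter α), mU 𝒲 = 𝔚 ∧
      Ultrafilter.map (Ultrafilter.map f) 𝒲 = 𝔓 := by
  classical
  set S : Set (Set (Ultrafilter α)) :=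
    {s | ∃ A ∈ 𝔚, ∃ 𝒞 ∈ 𝔓, s = {𝔴 | A ∈ 𝔴} ∩ (Ultrafilter.map f) ⁻¹' 𝒞} with hs
  have key : ∀ A ∈ 𝔚, ∀ 𝒞 ∈ 𝔓, ∃ 𝔴 : Ultrafilter α, A ∈ 𝔴 ∧ Ultrafilter.map f 𝔴 ∈ 𝒞 := by
    intro A hA 𝒞 h𝒞
    have h1 : f '' A ∈ Ultrafilter.map f 𝔚 := by
      rw [Ultrafilter.mem_map]
      exact Filter.mem_of_superset hA (Set.subset_preimage_image f A)
    rw [h, mem_mU] at h1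
    obtain ⟨𝔠, h𝔠1, h𝔠2⟩ := Ultrafilter.nonempty_of_mem (𝔓.inter_mem h1 h𝒞)
    obtain ⟨𝔴, h1, h2⟩ := exists_lift_of_image_mem f A 𝔠 h𝔠1
    exact ⟨𝔴, h1, h2 ▸ h𝔠2⟩
  obtain ⟨𝒲, h𝒲⟩ : ∃ 𝒲 : Ultrafilter (Ultrafilter α), ∀ s ∈ S, s ∈ 𝒲 := by
    apply exists_ultrafilter_directed
    · exact ⟨_, ⟨Set.univ, Filter.univ_mem, Set.univ, Filter.univ_mem, rfl⟩⟩
    · rintro _ ⟨A, hA, 𝒞, h𝒞, rfl⟩ _ ⟨A', hA', 𝒞', h𝒞', rfl⟩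
      refine ⟨_, ⟨A ∩ A', 𝔚.inter_mem hA hA', 𝒞 ∩ 𝒞', 𝔓.inter_mem h𝒞 h𝒞', rfl⟩, ?_⟩
      rintro 𝔴 ⟨h1, h3⟩
      have hA𝔴 : A ∈ 𝔴 := Filter.mem_of_superset h1 Set.inter_subset_left
      have hA'𝔴 : A' ∈ 𝔴 := Filter.mem_of_superset h1 Set.inter_subset_right
      exact ⟨⟨hA𝔴, h3.1⟩, hA'𝔴, h3.2⟩
    · rintro _ ⟨A, hA, 𝒞, h𝒞, rfl⟩
      obtain ⟨𝔴, h1, h2⟩ := key A hA 𝒞 h𝒞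
      exact ⟨𝔴, h1, h2⟩
  refine ⟨𝒲, (eq_of_le_sets fun A hA => ?_).symm, (eq_of_le_sets fun 𝒞 h𝒞 => ?_).symm⟩
  · rw [mem_mU]
    have := h𝒲 _ ⟨A, hA, Set.univ, Filter.univ_mem, rfl⟩
    exact Filter.mem_of_superset this (fun 𝔴 h𝔴 => h𝔴.1)
  · rw [Ultrafilter.mem_map]
    have := h𝒲 _ ⟨Set.univ, Filter.univ_mem, 𝒞, h𝒞, rfl⟩
    exact Filter.mem_of_superset this (fun 𝔴 h𝔴 => h𝔴.2)


lemma ennreal_le_of_forall_pos {a b : ℝ≥0∞} (h : ∀ ε : ℝ≥0∞, 0 < ε → ε < ⊤ → a ≤ b + ε) :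
    a ≤ b := by
  refine ENNReal.le_of_forall_pos_le_add fun ε hε _ => ?_
  exact h ε (by exact_mod_cast hε) ENNReal.coe_lt_top

lemma le_uExt {r : α → β → ℝ≥0∞} {𝔛 : Ultrafilter α} {𝔶 : Ultrafilter β} {𝒜 : Set α}
    {B : Set β} (h𝒜 : 𝒜 ∈ 𝔛) (hB : B ∈ 𝔶) :
    (⨅ x ∈ 𝒜, ⨅ y ∈ B, r x y) ≤ uExt r 𝔛 𝔶 := by
  refine le_trans ?_ (le_iSup₂ (f := fun A (_ : A ∈ 𝔛) => ⨆ B ∈ 𝔶, ⨅ x ∈ A, ⨅ y ∈ B, r x y) 𝒜 h𝒜)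
  exact le_iSup₂ (f := fun B' (_ : B' ∈ 𝔶) => ⨅ x ∈ 𝒜, ⨅ y ∈ B', r x y) B hB

lemma uExt_le {r : α → β → ℝ≥0∞} {𝔛 : Ultrafilter α} {𝔶 : Ultrafilter β} {c : ℝ≥0∞}
    (h : ∀ 𝒜 ∈ 𝔛, ∀ B ∈ 𝔶, ∃ x ∈ 𝒜, ∃ y ∈ B, r x y ≤ c) : uExt r 𝔛 𝔶 ≤ c := by
  refine iSup₂_le fun 𝒜 h𝒜 => iSup₂_le fun B hB => ?_
  obtain ⟨x, hx, y, hy, hr⟩ := h 𝒜 h𝒜 B hB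
  exact le_trans (le_trans (iInf₂_le x hx) (iInf₂_le y hy)) hr

lemma le_appConv {δ : Set α → α → ℝ≥0∞} {𝔵 : Ultrafilter α} {A : Set α} (hA : A ∈ 𝔵)
    (x : α) : δ A x ≤ appConv δ 𝔵 x :=
  le_iSup₂ (f := fun A (_ : A ∈ 𝔵) => δ A x) A hA

lemma dist_antitone {δ : Set α → α → ℝ≥0∞} (hδ : IsApproachDistance δ) {A B : Set α}
    (hAB : A ⊆ B) (x : α) : δ B x ≤ δ A x := by
  have : A ∪ B = B := Set.union_eq_self_of_subset_left hAB
  calc δ B x = min (δ A x) (δ B x) := by rw [← hδ.dist_union, this]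
    _ ≤ δ A x := min_le_left _ _

/-- A convergence relation is reflexive and transitive. -/
structure IsConv {Y : Type*} (b : Ultrafilter Y → Y → ℝ≥0∞) : Prop where
  refl : ∀ y : Y, b (pure y) y = 0
  trans : ∀ (𝔜 : Ultrafilter (Ultrafilter Y)) (𝔶 : Ultrafilter Y) (y : Y),
    b (mU 𝔜) y ≤ uExt b 𝔜 𝔶 + b 𝔶 y

lemma appConv_pure {δ : Set α → α → ℝ≥0∞} (hδ : IsApproachDistance δ) (x : α) :
    appConv δ (pure x) x = 0 := by
  refine le_antisymm (iSup₂_le fun A hA => ?_) (zero_le)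
  rw [Ultrafilter.mem_pure] at hA
  calc δ A x ≤ δ {x} x := dist_antitone hδ (by simpa using hA) x
    _ = 0 := hδ.dist_singleton x

lemma appConv_trans {δ : Set α → α → ℝ≥0∞} (hδ : IsApproachDistance δ)
    (𝔛 : Ultrafilter (Ultrafilter α)) (𝔵 : Ultrafilter α) (x : α) :
    appConv δ (mU 𝔛) x ≤ uExt (appConv δ) 𝔛 𝔵 + appConv δ 𝔵 x := by
  set u := uExt (appConv δ) 𝔛 𝔵 with hu
  rcases eq_or_ne u ⊤ with hut | hut
  · rw [hut]; simp
  refine iSup₂_le fun A hA => ?_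
  refine ennreal_le_of_forall_pos fun ε hε hεt => ?_
  set B := {y | δ A y ≤ u + ε} with hB
  have hBx : B ∈ 𝔵 := by
    by_contra hc
    have hBc : Bᶜ ∈ 𝔵 := (Ultrafilter.compl_mem_iff_notMem).mpr hc
    have hAhat : {𝔶 : Ultrafilter α | A ∈ 𝔶} ∈ 𝔛 := (mem_mU).mp hA
    have hlow : u + ε ≤ ⨅ 𝔶 ∈ {𝔶 : Ultrafilter α | A ∈ 𝔶}, ⨅ y ∈ Bᶜ, appConv δ 𝔶 y := by
      refine le_iInf₂ fun 𝔶 h𝔶 => le_iInf₂ fun y hy => ?_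
      have h1 : δ A y ≤ appConv δ 𝔶 y := le_appConv h𝔶 y
      have h2 : u + ε < δ A y := lt_of_not_ge hy
      exact le_trans h2.le h1
    have := le_trans hlow (le_uExt hAhat hBc)
    rw [← hu] at this
    have : u + ε ≤ u := this
    exact absurd this (by
      simp only [not_le]
      exact ENNReal.lt_add_right hut hε.ne')
  calc δ A x ≤ δ {y | δ A y ≤ u + ε} x + (u + ε) := hδ.dist_closure A x (u + ε)
    _ = δ B x + (u + ε) := rfl
    _ ≤ appConv δ 𝔵 x + (u + ε) := by gcongr; exact le_appConv hBx x
    _ = u + appConv δ 𝔵 x + ε := by ring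

lemma isConv_appConv {δ : Set α → α → ℝ≥0∞} (hδ : IsApproachDistance δ) :
    IsConv (appConv δ) :=
  ⟨appConv_pure hδ, appConv_trans hδ⟩

/-- The distance associated to a convergence. -/
noncomputable def distOf {Y : Type*} (b : Ultrafilter Y → Y → ℝ≥0∞) (A : Set Y) (y : Y) :
    ℝ≥0∞ :=
  ⨅ 𝔶 : Ultrafilter Y, ⨅ _ : A ∈ 𝔶, b 𝔶 y

lemma distOf_le {b : Ultrafilter Y → Y → ℝ≥0∞} {A : Set Y} {𝔶 : Ultrafilter Y}
    (hA : A ∈ 𝔶) (y : Y) : distOf b A y ≤ b 𝔶 y :=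
  iInf₂_le 𝔶 hA


-- new chunk
lemma appConv_distOf {b : Ultrafilter Y → Y → ℝ≥0∞} (hb : IsConv b) (𝔶 : Ultrafilter Y)
    (y : Y) : appConv (distOf b) 𝔶 y = b 𝔶 y := by
  classical
  refine le_antisymm (iSup₂_le fun A hA => distOf_le hA y) ?_
  set S := appConv (distOf b) 𝔶 y with hS
  rcases eq_or_ne S ⊤ with hSt | hSt
  · rw [hSt]; exact le_top
  refine ennreal_le_of_forall_pos fun ε hε hεt => ?_
  -- choose, for every member B of 𝔶, an ultrafilter close to y containing B
  have hch : ∀ B : {B : Set Y // B ∈ 𝔶}, ∃ 𝔷 : Ultrafilter Y, B.1 ∈ 𝔷 ∧ b 𝔷 y < S + ε := by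
    rintro ⟨B, hB⟩
    have h1 : distOf b B y ≤ S := le_appConv hB y
    have h2 : distOf b B y < S + ε := lt_of_le_of_lt h1 (ENNReal.lt_add_right hSt hε.ne')
    rw [distOf, iInf_lt_iff] at h2
    obtain ⟨𝔷, h𝔷⟩ := h2
    rw [iInf_lt_iff] at h𝔷
    obtain ⟨hB𝔷, h𝔷2⟩ := h𝔷
    exact ⟨𝔷, hB𝔷, h𝔷2⟩
  choose g hg1 hg2 using hch
  -- the Kowalsky-type ultrafilter on U Y
  obtain ⟨𝒳, h𝒳⟩ : ∃ 𝒳 : Ultrafilter (Ultrafilter Y),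
      ∀ s ∈ {s | ∃ A ∈ 𝔶, s = g '' {B : {B : Set Y // B ∈ 𝔶} | B.1 ⊆ A}}, s ∈ 𝒳 := by
    apply exists_ultrafilter_directed
    · exact ⟨_, ⟨Set.univ, Filter.univ_mem, rfl⟩⟩
    · rintro _ ⟨A, hA, rfl⟩ _ ⟨A', hA', rfl⟩
      refine ⟨_, ⟨A ∩ A', 𝔶.inter_mem hA hA', rfl⟩, ?_⟩
      rintro _ ⟨B, hB, rfl⟩
      exact ⟨⟨B, hB.trans Set.inter_subset_left, rfl⟩, ⟨B, hB.trans Set.inter_subset_right, rfl⟩⟩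
    · rintro _ ⟨A, hA, rfl⟩
      exact ⟨g ⟨A, hA⟩, ⟨⟨A, hA⟩, Set.Subset.rfl, rfl⟩⟩
  have hm : mU 𝒳 = 𝔶 := by
    refine (eq_of_le_sets fun A hA => ?_).symm
    rw [mem_mU]
    refine Filter.mem_of_superset (h𝒳 _ ⟨A, hA, rfl⟩) ?_
    rintro _ ⟨B, hB, rfl⟩
    exact Filter.mem_of_superset (hg1 B) hB
  have huE : uExt b 𝒳 (pure y) ≤ S + ε := by
    refine uExt_le fun 𝒜 h𝒜 B' hB' => ?_
    have huniv := h𝒳 _ ⟨Set.univ, Filter.univ_mem, rfl⟩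
    obtain ⟨𝔷, h𝔷1, h𝔷2⟩ := Ultrafilter.nonempty_of_mem (𝒳.inter_mem h𝒜 huniv)
    obtain ⟨B, _, rfl⟩ := h𝔷2
    rw [Ultrafilter.mem_pure] at hB'
    exact ⟨g B, h𝔷1, y, hB', (hg2 B).le⟩
  calc b 𝔶 y = b (mU 𝒳) y := by rw [hm]
    _ ≤ uExt b 𝒳 (pure y) + b (pure y) y := hb.trans 𝒳 (pure y) y
    _ = uExt b 𝒳 (pure y) := by rw [hb.refl y, add_zero]
    _ ≤ S + ε := huE

lemma isApproachDistance_distOf {b : Ultrafilter Y → Y → ℝ≥0∞} (hb : IsConv b) :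
    IsApproachDistance (distOf b) := by
  classical
  constructor
  · intro x
    refine le_antisymm ?_ (zero_le)
    calc distOf b {x} x ≤ b (pure x) x := distOf_le (by simp) x
      _ = 0 := hb.refl x
  · intro x
    simp [distOf, fun 𝔶 : Ultrafilter Y => 𝔶.empty_notMem]
  · intro A B x
    refine le_antisymm (le_min ?_ ?_) ?_
    · exact le_iInf₂ fun 𝔶 hA =>
        distOf_le (Filter.mem_of_superset hA Set.subset_union_left) x
    · exact le_iInf₂ fun 𝔶 hB =>
        distOf_le (Filter.mem_of_superset hB Set.subset_union_right) x
    · refine le_iInf₂ fun 𝔶 hAB => ?_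
      rcases (Ultrafilter.union_mem_iff).mp hAB with h | h
      · exact le_trans (min_le_left _ _) (distOf_le h x)
      · exact le_trans (min_le_right _ _) (distOf_le h x)
  · intro A x ε
    set E := {y | distOf b A y ≤ ε} with hE
    set D := distOf b E x with hD
    rcases eq_or_ne D ⊤ with hDt | hDt
    · rw [hDt]; simp
    rcases eq_or_ne ε ⊤ with hεt | hεt
    · rw [hεt]; simp
    refine le_trans (ennreal_le_of_forall_pos fun ε₂ hε₂ hε₂t => ?_) le_rfl
    -- choose 𝔷 containing E with b 𝔷 x close to D
    have h𝔷 : ∃ 𝔷 : Ultrafilter Y, E ∈ 𝔷 ∧ b 𝔷 x < D + ε₂/2 := by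
      have : distOf b E x < D + ε₂/2 := by
        rw [← hD]
        exact ENNReal.lt_add_right hDt (by simp [hε₂.ne'])
      rw [distOf, iInf_lt_iff] at this
      obtain ⟨𝔷, h1⟩ := this
      rw [iInf_lt_iff] at h1
      obtain ⟨h2, h3⟩ := h1
      exact ⟨𝔷, h2, h3⟩
    obtain ⟨𝔷, hE𝔷, h𝔷x⟩ := h𝔷
    -- choose for each y a witnessing ultrafilter
    have hch : ∀ y : Y, ∃ 𝔶 : Ultrafilter Y, (y ∈ E → A ∈ 𝔶 ∧ b 𝔶 y < ε + ε₂/2) := by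
      intro y
      by_cases hy : y ∈ E
      · have h1 : distOf b A y ≤ ε := hy
        have h2 : distOf b A y < ε + ε₂/2 := lt_of_le_of_lt h1
          (ENNReal.lt_add_right hεt (by simp [hε₂.ne']))
        rw [distOf, iInf_lt_iff] at h2
        obtain ⟨𝔶, h3⟩ := h2
        rw [iInf_lt_iff] at h3
        exact ⟨𝔶, fun _ => ⟨h3.1, h3.2⟩⟩
      · exact ⟨pure y, fun h => absurd h hy⟩
    choose g hg using hch
    set 𝒳 := Ultrafilter.map g 𝔷 with h𝒳
    have hAm : A ∈ mU 𝒳 := by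
      rw [mem_mU, h𝒳, Ultrafilter.mem_map]
      refine Filter.mem_of_superset hE𝔷 fun y hy => ?_
      exact (hg y hy).1
    have huE : uExt b 𝒳 𝔷 ≤ ε + ε₂/2 := by
      refine uExt_le fun 𝒜 h𝒜 B hB => ?_
      rw [h𝒳, Ultrafilter.mem_map] at h𝒜
      obtain ⟨y, hy⟩ := Ultrafilter.nonempty_of_mem (𝔷.inter_mem (𝔷.inter_mem h𝒜 hB) hE𝔷)
      exact ⟨g y, hy.1.1, y, hy.1.2, (hg y hy.2).2.le⟩
    calc distOf b A x ≤ b (mU 𝒳) x := distOf_le hAm x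
      _ ≤ uExt b 𝒳 𝔷 + b 𝔷 x := hb.trans 𝒳 𝔷 x
      _ ≤ (ε + ε₂/2) + (D + ε₂/2) := add_le_add huE h𝔷x.le
      _ = (D + ε) + ε₂ := by
          rw [show (ε + ε₂/2) + (D + ε₂/2) = (D + ε) + (ε₂/2 + ε₂/2) by ring,
            ENNReal.add_halves]



section Cat

/-! ### Products in App -/

noncomputable abbrev conv (Z : AppSpace) : Ultrafilter Z.carrier → Z.carrier → ℝ≥0∞ :=
  appConv Z.dist

lemma isConv_conv (Z : AppSpace) : IsConv (conv Z) := isConv_appConv Z.isApproachDistance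

lemma uExt_map_le {P Q : Type*} {s : Ultrafilter P → P → ℝ≥0∞} {r : Ultrafilter Q → Q → ℝ≥0∞}
    (f : P → Q) (h : ∀ (𝔴 : Ultrafilter P) (w : P), r (Ultrafilter.map f 𝔴) (f w) ≤ s 𝔴 w)
    (𝒲 : Ultrafilter (Ultrafilter P)) (𝔴 : Ultrafilter P) :
    uExt r (Ultrafilter.map (Ultrafilter.map f) 𝒲) (Ultrafilter.map f 𝔴) ≤ uExt s 𝒲 𝔴 := by
  refine iSup₂_le fun 𝒜' h𝒜' => iSup₂_le fun B' hB' => ?_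
  rw [Ultrafilter.mem_map] at h𝒜' hB'
  refine le_trans ?_ (le_uExt h𝒜' hB')
  refine le_iInf₂ fun 𝔴'' h𝔴'' => le_iInf₂ fun w hw => ?_
  exact le_trans (le_trans (iInf₂_le (Ultrafilter.map f 𝔴'') h𝔴'') (iInf₂_le (f w) hw)) (h 𝔴'' w)

/-- The product convergence on the product of two approach spaces. -/
noncomputable def prodConv (B C : AppSpace) :
    Ultrafilter (B.carrier × C.carrier) → B.carrier × C.carrier → ℝ≥0∞ := fun 𝔴 p =>
  max (conv B (Ultrafilter.map Prod.fst 𝔴) p.1) (conv C (Ultrafilter.map Prod.snd 𝔴) p.2)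

lemma isConv_prodConv (B C : AppSpace) : IsConv (prodConv B C) := by
  constructor
  · intro p
    simp only [prodConv]
    rw [show Ultrafilter.map Prod.fst (pure p) = pure p.1 from rfl,
      show Ultrafilter.map Prod.snd (pure p) = pure p.2 from rfl,
      (isConv_conv B).refl, (isConv_conv C).refl]
    simp
  · intro 𝔚 𝔴 p
    have h1 : conv B (Ultrafilter.map Prod.fst (mU 𝔚)) p.1 ≤ uExt (prodConv B C) 𝔚 𝔴 +
        prodConv B C 𝔴 p := by
      rw [mU_map]
      refine le_trans ((isConv_conv B).trans _ (Ultrafilter.map Prod.fst 𝔴) p.1) ?_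
      gcongr
      · exact uExt_map_le Prod.fst (fun 𝔴' w => le_max_left _ _) 𝔚 𝔴
      · exact le_max_left _ _
    have h2 : conv C (Ultrafilter.map Prod.snd (mU 𝔚)) p.2 ≤ uExt (prodConv B C) 𝔚 𝔴 +
        prodConv B C 𝔴 p := by
      rw [mU_map]
      refine le_trans ((isConv_conv C).trans _ (Ultrafilter.map Prod.snd 𝔴) p.2) ?_
      gcongr
      · exact uExt_map_le Prod.snd (fun 𝔴' w => le_max_right _ _) 𝔚 𝔴
      · exact le_max_right _ _
    exact max_le h1 h2

/-- The product of two approach spaces. -/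
noncomputable def prodSpace (B C : AppSpace) : AppSpace :=
  ⟨B.carrier × C.carrier, distOf (prodConv B C), isApproachDistance_distOf (isConv_prodConv B C)⟩

lemma conv_prodSpace (B C : AppSpace) : conv (prodSpace B C) = prodConv B C :=
  funext₂ (appConv_distOf (isConv_prodConv B C))

/-- First projection is a contraction. -/
lemma fst_contraction (B C : AppSpace) :
    IsContraction (conv (prodSpace B C)) (conv B) Prod.fst := by
  intro 𝔴 p
  rw [conv_prodSpace]
  exact le_max_left _ _

lemma snd_contraction (B C : AppSpace) :
    IsContraction (conv (prodSpace B C)) (conv C) Prod.snd := by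
  intro 𝔴 p
  rw [conv_prodSpace]
  exact le_max_right _ _

lemma pair_contraction {W B C : AppSpace} (f : W.carrier → B.carrier)
    (g : W.carrier → C.carrier) (hf : IsContraction (conv W) (conv B) f)
    (hg : IsContraction (conv W) (conv C) g) :
    IsContraction (conv W) (conv (prodSpace B C)) (fun w => (f w, g w)) := by
  intro 𝔴 w
  rw [conv_prodSpace]
  refine max_le ?_ ?_
  · show conv B (Ultrafilter.map f 𝔴) (f w) ≤ conv W 𝔴 w
    exact hf 𝔴 w
  · show conv C (Ultrafilter.map g 𝔴) (g w) ≤ conv W 𝔴 w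
    exact hg 𝔴 w

/-! ### The exponential -/

/-- Truncated "max-residual": the least `γ` with `α ≤ max γ β`. -/
noncomputable def mres (α β : ℝ≥0∞) : ℝ≥0∞ := if α ≤ β then 0 else α

lemma mres_le_iff {α β γ : ℝ≥0∞} : mres α β ≤ γ ↔ α ≤ max γ β := by
  unfold mres
  split
  · next h => simp [le_max_of_le_right h]
  · next h =>
    constructor
    · intro h2; exact le_max_of_le_left h2
    · intro h2
      rcases max_cases γ β with ⟨he, _⟩ | ⟨he, hlt⟩
      · rwa [he] at h2
      · rw [he] at h2; exact absurd h2 h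

lemma le_max_mres (α β : ℝ≥0∞) : α ≤ max (mres α β) β := mres_le_iff.mp le_rfl

variable (X : AppSpace)

/-- Carrier of the exponential `Z^X`: contractions from `X` to `Z`. -/
def ExpCarrier (Z : AppSpace) : Type :=
  {k : X.carrier → Z.carrier // IsContraction (conv X) (conv Z) k}

/-- Evaluation map. -/
def evMap (Z : AppSpace) : ExpCarrier X Z × X.carrier → Z.carrier := fun p => p.1.1 p.2

/-- The exponential convergence on `Z^X`. -/
noncomputable def expConv (Z : AppSpace) :
    Ultrafilter (ExpCarrier X Z) → ExpCarrier X Z → ℝ≥0∞ := fun 𝔭 h =>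
  ⨆ (𝔴 : Ultrafilter (ExpCarrier X Z × X.carrier))
    (_ : Ultrafilter.map Prod.fst 𝔴 = 𝔭) (x : X.carrier),
      mres (conv Z (Ultrafilter.map (evMap X Z) 𝔴) (h.1 x))
        (conv X (Ultrafilter.map Prod.snd 𝔴) x)

lemma expConv_le_iff {Z : AppSpace} {𝔭 : Ultrafilter (ExpCarrier X Z)} {h : ExpCarrier X Z}
    {γ : ℝ≥0∞} : expConv X Z 𝔭 h ≤ γ ↔
      ∀ 𝔴 : Ultrafilter (ExpCarrier X Z × X.carrier), Ultrafilter.map Prod.fst 𝔴 = 𝔭 →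
        ∀ x : X.carrier, conv Z (Ultrafilter.map (evMap X Z) 𝔴) (h.1 x) ≤
          max γ (conv X (Ultrafilter.map Prod.snd 𝔴) x) := by
  constructor
  · intro hle 𝔴 h𝔴 x
    rw [← mres_le_iff]
    refine le_trans (le_iSup₂_of_le 𝔴 h𝔴 ?_) hle
    exact le_iSup (fun x => mres (conv Z (Ultrafilter.map (evMap X Z) 𝔴) (h.1 x))
      (conv X (Ultrafilter.map Prod.snd 𝔴) x)) x
  · intro hb
    refine iSup_le fun 𝔴 => iSup_le fun h𝔴 => iSup_le fun x => ?_
    rw [mres_le_iff]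
    exact hb 𝔴 h𝔴 x

lemma expConv_spec {Z : AppSpace} {𝔭 : Ultrafilter (ExpCarrier X Z)} {h : ExpCarrier X Z}
    {𝔴 : Ultrafilter (ExpCarrier X Z × X.carrier)} (h𝔴 : Ultrafilter.map Prod.fst 𝔴 = 𝔭)
    (x : X.carrier) : conv Z (Ultrafilter.map (evMap X Z) 𝔴) (h.1 x) ≤
      max (expConv X Z 𝔭 h) (conv X (Ultrafilter.map Prod.snd 𝔴) x) :=
  (expConv_le_iff X).mp le_rfl 𝔴 h𝔴 x

lemma expConv_refl {Z : AppSpace} (h : ExpCarrier X Z) : expConv X Z (pure h) h = 0 := by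
  refine le_antisymm ((expConv_le_iff X).mpr fun 𝔴 h𝔴 x => ?_) (zero_le)
  have hset : {p : ExpCarrier X Z × X.carrier | p.1 = h} ∈ 𝔴 := by
    have : ({h} : Set (ExpCarrier X Z)) ∈ Ultrafilter.map Prod.fst 𝔴 := by
      rw [h𝔴, Ultrafilter.mem_pure]; rfl
    rw [Ultrafilter.mem_map] at this
    exact this
  have hmap : Ultrafilter.map (evMap X Z) 𝔴 =
      Ultrafilter.map h.1 (Ultrafilter.map Prod.snd 𝔴) := by
    rw [Ultrafilter.map_map]
    apply map_congr
    refine Filter.mem_of_superset hset fun p hp => ?_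
    obtain ⟨k, y⟩ := p
    have : k = h := hp
    subst this
    rfl
  rw [hmap]
  exact le_max_of_le_right (h.2 (Ultrafilter.map Prod.snd 𝔴) x)

lemma expConv_trans {Z : AppSpace}
    (hcond : ∀ (𝔛 : Ultrafilter (Ultrafilter X.carrier)) (x₀ : X.carrier) (u v : ℝ≥0∞),
      ⨅ 𝔵 : Ultrafilter X.carrier, (max u (conv X 𝔵 x₀) + max v (uExt (conv X) 𝔛 𝔵)) ≤
        max (u + v) (conv X (mU 𝔛) x₀))
    (𝔓 : Ultrafilter (Ultrafilter (ExpCarrier X Z))) (𝔭 : Ultrafilter (ExpCarrier X Z))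
    (h : ExpCarrier X Z) :
    expConv X Z (mU 𝔓) h ≤ uExt (expConv X Z) 𝔓 𝔭 + expConv X Z 𝔭 h := by
  classical
  set u₀ := uExt (expConv X Z) 𝔓 𝔭 with hu₀
  set v₀ := expConv X Z 𝔭 h with hv₀
  rcases eq_or_ne u₀ ⊤ with ht | hu₀t
  · rw [ht, top_add]; exact le_top
  rcases eq_or_ne v₀ ⊤ with ht | hv₀t
  · rw [ht, add_top]; exact le_top
  rw [expConv_le_iff]
  intro 𝔚 h𝔚 x₀
  obtain ⟨𝒲, hm𝒲, hf𝒲⟩ := exists_bc Prod.fst 𝔚 𝔓 h𝔚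
  set 𝔛 := Ultrafilter.map (Ultrafilter.map Prod.snd) 𝒲 with h𝔛
  have hm𝔛 : mU 𝔛 = Ultrafilter.map Prod.snd 𝔚 := by rw [h𝔛, ← mU_map, hm𝒲]
  have key : ∀ 𝔵 : Ultrafilter X.carrier,
      conv Z (Ultrafilter.map (evMap X Z) 𝔚) (h.1 x₀) ≤
        max v₀ (conv X 𝔵 x₀) + max u₀ (uExt (conv X) 𝔛 𝔵) := by
    intro 𝔵
    set t := conv X 𝔵 x₀ with htdef
    set s := uExt (conv X) 𝔛 𝔵 with hs
    rcases eq_or_ne s ⊤ with hst | hst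
    · rw [hst]
      simp
    refine ennreal_le_of_forall_pos fun ε hε hεt => ?_
    -- existence of good triples for the coupling
    have hGex : ∀ 𝒜 ∈ 𝒲, ∀ P ∈ 𝔭, ∀ A ∈ 𝔵, ∃ 𝔴'' ∈ 𝒜, ∃ k ∈ P, ∃ x ∈ A,
        expConv X Z (Ultrafilter.map Prod.fst 𝔴'') k ≤ u₀ + ε ∧
          conv X (Ultrafilter.map Prod.snd 𝔴'') x ≤ s + ε := by
      intro 𝒜 h𝒜 P hP A hA
      set B1 : Set (Ultrafilter (ExpCarrier X Z × X.carrier)) :=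
        {𝔴'' | ∃ x ∈ A, conv X (Ultrafilter.map Prod.snd 𝔴'') x ≤ s + ε} with hB1def
      have hB1 : B1 ∈ 𝒲 := by
        by_contra hcn
        have hcc : 𝒜 ∩ B1ᶜ ∈ 𝒲 :=
          𝒲.inter_mem h𝒜 ((Ultrafilter.compl_mem_iff_notMem).mpr hcn)
        have himg : (fun 𝔴'' => Ultrafilter.map Prod.snd 𝔴'') '' (𝒜 ∩ B1ᶜ) ∈ 𝔛 := by
          rw [h𝔛, Ultrafilter.mem_map]
          exact Filter.mem_of_superset hcc (Set.subset_preimage_image _ _)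
        have hlow : s + ε ≤
            ⨅ 𝔶 ∈ (fun 𝔴'' => Ultrafilter.map Prod.snd 𝔴'') '' (𝒜 ∩ B1ᶜ), ⨅ x ∈ A,
              conv X 𝔶 x := by
          refine le_iInf₂ fun 𝔶 h𝔶 => le_iInf₂ fun x hx => ?_
          obtain ⟨𝔴'', h𝔴'', rfl⟩ := h𝔶
          have : ¬ ∃ x ∈ A, conv X (Ultrafilter.map Prod.snd 𝔴'') x ≤ s + ε := h𝔴''.2
          push_neg at this
          exact (this x hx).le
        have : s + ε ≤ s := le_trans hlow (le_uExt himg hA)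
        exact absurd this (by simp only [not_le]; exact ENNReal.lt_add_right hst hε.ne')
      set B2 : Set (Ultrafilter (ExpCarrier X Z × X.carrier)) :=
        {𝔴'' | ∃ k ∈ P, expConv X Z (Ultrafilter.map Prod.fst 𝔴'') k ≤ u₀ + ε} with hB2def
      have hB2 : B2 ∈ 𝒲 := by
        by_contra hcn
        have hcc : B2ᶜ ∈ 𝒲 := (Ultrafilter.compl_mem_iff_notMem).mpr hcn
        have himg : (fun 𝔴'' => Ultrafilter.map Prod.fst 𝔴'') '' B2ᶜ ∈ 𝔓 := by
          rw [← hf𝒲, Ultrafilter.mem_map]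
          exact Filter.mem_of_superset hcc (Set.subset_preimage_image _ _)
        have hlow : u₀ + ε ≤
            ⨅ 𝔮 ∈ (fun 𝔴'' => Ultrafilter.map Prod.fst 𝔴'') '' B2ᶜ, ⨅ k ∈ P,
              expConv X Z 𝔮 k := by
          refine le_iInf₂ fun 𝔮 h𝔮 => le_iInf₂ fun k hk => ?_
          obtain ⟨𝔴'', h𝔴'', rfl⟩ := h𝔮
          have : ¬ ∃ k ∈ P, expConv X Z (Ultrafilter.map Prod.fst 𝔴'') k ≤ u₀ + ε := h𝔴''
          push_neg at this
          exact (this k hk).le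
        have : u₀ + ε ≤ u₀ := le_trans hlow (le_uExt himg hP)
        exact absurd this (by simp only [not_le]; exact ENNReal.lt_add_right hu₀t hε.ne')
      obtain ⟨𝔴'', h𝔴''⟩ := Ultrafilter.nonempty_of_mem (𝒲.inter_mem (𝒲.inter_mem h𝒜 hB1) hB2)
      obtain ⟨⟨h1, hx1⟩, hk1⟩ := h𝔴''
      obtain ⟨x, hxA, hxb⟩ := hx1
      obtain ⟨k, hkP, hkb⟩ := hk1
      exact ⟨𝔴'', h1, k, hkP, x, hxA, hkb, hxb⟩
    -- build the coupling ultrafilter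
    obtain ⟨𝔘, h𝔘⟩ : ∃ 𝔘 : Ultrafilter
        (Ultrafilter (ExpCarrier X Z × X.carrier) × (ExpCarrier X Z × X.carrier)),
        ∀ g ∈ {g | ∃ 𝒜 ∈ 𝒲, ∃ P ∈ 𝔭, ∃ A ∈ 𝔵,
          g = {p : Ultrafilter (ExpCarrier X Z × X.carrier) × (ExpCarrier X Z × X.carrier) |
            p.1 ∈ 𝒜 ∧ p.2.1 ∈ P ∧ p.2.2 ∈ A ∧
            expConv X Z (Ultrafilter.map Prod.fst p.1) p.2.1 ≤ u₀ + ε ∧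
            conv X (Ultrafilter.map Prod.snd p.1) p.2.2 ≤ s + ε}}, g ∈ 𝔘 := by
      apply exists_ultrafilter_directed
      · exact ⟨_, ⟨Set.univ, Filter.univ_mem, Set.univ, Filter.univ_mem, Set.univ,
          Filter.univ_mem, rfl⟩⟩
      · rintro _ ⟨𝒜, h𝒜, P, hP, A, hA, rfl⟩ _ ⟨𝒜', h𝒜', P', hP', A', hA', rfl⟩
        refine ⟨_, ⟨𝒜 ∩ 𝒜', 𝒲.inter_mem h𝒜 h𝒜', P ∩ P', 𝔭.inter_mem hP hP',
          A ∩ A', 𝔵.inter_mem hA hA', rfl⟩, ?_⟩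
        rintro p ⟨hp1, hp2, hp3, hp4, hp5⟩
        exact ⟨⟨hp1.1, hp2.1, hp3.1, hp4, hp5⟩, hp1.2, hp2.2, hp3.2, hp4, hp5⟩
      · rintro _ ⟨𝒜, h𝒜, P, hP, A, hA, rfl⟩
        obtain ⟨𝔴'', h1, k, hkP, x, hxA, hc1, hc2⟩ := hGex 𝒜 h𝒜 P hP A hA
        exact ⟨(𝔴'', (k, x)), h1, hkP, hxA, hc1, hc2⟩
    set 𝔴' := Ultrafilter.map Prod.snd 𝔘 with h𝔴'def
    have h𝔴'fst : Ultrafilter.map Prod.fst 𝔴' = 𝔭 := by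
      rw [h𝔴'def, Ultrafilter.map_map]
      refine (eq_of_le_sets fun P hP => ?_).symm
      rw [Ultrafilter.mem_map]
      refine Filter.mem_of_superset
        (h𝔘 _ ⟨Set.univ, Filter.univ_mem, P, hP, Set.univ, Filter.univ_mem, rfl⟩) ?_
      rintro p ⟨_, hp2, _, _, _⟩
      exact hp2
    have h𝔴'snd : Ultrafilter.map Prod.snd 𝔴' = 𝔵 := by
      rw [h𝔴'def, Ultrafilter.map_map]
      refine (eq_of_le_sets fun A hA => ?_).symm
      rw [Ultrafilter.mem_map]
      refine Filter.mem_of_superset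
        (h𝔘 _ ⟨Set.univ, Filter.univ_mem, Set.univ, Filter.univ_mem, A, hA, rfl⟩) ?_
      rintro p ⟨_, _, hp3, _, _⟩
      exact hp3
    have hae := h𝔘 _ ⟨Set.univ, Filter.univ_mem, Set.univ, Filter.univ_mem, Set.univ,
      Filter.univ_mem, rfl⟩
    -- the main estimate
    have hEeq : Ultrafilter.map (evMap X Z) 𝔚 =
        mU (Ultrafilter.map (Ultrafilter.map (evMap X Z)) 𝒲) := by
      rw [← mU_map, hm𝒲]
    have boundA : uExt (conv Z) (Ultrafilter.map (Ultrafilter.map (evMap X Z)) 𝒲)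
        (Ultrafilter.map (evMap X Z) 𝔴') ≤ max u₀ s + ε := by
      refine uExt_le fun 𝒜' h𝒜' B' hB' => ?_
      rw [Ultrafilter.mem_map] at h𝒜'
      rw [Ultrafilter.mem_map] at hB'
      rw [h𝔴'def, Ultrafilter.mem_map] at hB'
      have hmem : {p : Ultrafilter (ExpCarrier X Z × X.carrier) ×
          (ExpCarrier X Z × X.carrier) |
            Ultrafilter.map (evMap X Z) p.1 ∈ 𝒜'} ∈ 𝔘 := by
        have : Prod.fst ⁻¹' (Ultrafilter.map (evMap X Z) ⁻¹' 𝒜') ∈ 𝔘 := by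
          have hfst𝔘 : Ultrafilter.map Prod.fst 𝔘 = 𝒲 := by
            refine (eq_of_le_sets fun 𝒜 h𝒜 => ?_).symm
            rw [Ultrafilter.mem_map]
            refine Filter.mem_of_superset
              (h𝔘 _ ⟨𝒜, h𝒜, Set.univ, Filter.univ_mem, Set.univ, Filter.univ_mem, rfl⟩) ?_
            rintro p ⟨hp1, _, _, _, _⟩
            exact hp1
          have : Ultrafilter.map (evMap X Z) ⁻¹' 𝒜' ∈ Ultrafilter.map Prod.fst 𝔘 := by
            rw [hfst𝔘]; exact h𝒜'
          rwa [Ultrafilter.mem_map] at this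
        exact this
      obtain ⟨p, hp⟩ := Ultrafilter.nonempty_of_mem
        (𝔘.inter_mem (𝔘.inter_mem hmem hB') hae)
      obtain ⟨⟨hpA, hpB⟩, _, _, _, hc1, hc2⟩ := hp
      refine ⟨Ultrafilter.map (evMap X Z) p.1, hpA, evMap X Z p.2, hpB, ?_⟩
      refine le_trans (expConv_spec X rfl p.2.2) ?_
      refine max_le (le_trans hc1 ?_) (le_trans hc2 ?_)
      · exact add_le_add (le_max_left _ _) le_rfl
      · exact add_le_add (le_max_right _ _) le_rfl
    have boundB : conv Z (Ultrafilter.map (evMap X Z) 𝔴') (h.1 x₀) ≤ max v₀ t := by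
      refine le_trans (expConv_spec X h𝔴'fst x₀) ?_
      rw [h𝔴'snd]
    calc conv Z (Ultrafilter.map (evMap X Z) 𝔚) (h.1 x₀)
        = conv Z (mU (Ultrafilter.map (Ultrafilter.map (evMap X Z)) 𝒲)) (h.1 x₀) := by
          rw [← hEeq]
      _ ≤ uExt (conv Z) (Ultrafilter.map (Ultrafilter.map (evMap X Z)) 𝒲)
            (Ultrafilter.map (evMap X Z) 𝔴') +
          conv Z (Ultrafilter.map (evMap X Z) 𝔴') (h.1 x₀) :=
        (isConv_conv Z).trans _ _ _
      _ ≤ (max u₀ s + ε) + max v₀ t := add_le_add boundA boundB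
      _ = (max v₀ t + max u₀ s) + ε := by ring
  calc conv Z (Ultrafilter.map (evMap X Z) 𝔚) (h.1 x₀)
      ≤ ⨅ 𝔵 : Ultrafilter X.carrier,
          (max v₀ (conv X 𝔵 x₀) + max u₀ (uExt (conv X) 𝔛 𝔵)) := le_iInf key
    _ ≤ max (v₀ + u₀) (conv X (mU 𝔛) x₀) := hcond 𝔛 x₀ v₀ u₀
    _ = max (u₀ + v₀) (conv X (Ultrafilter.map Prod.snd 𝔚) x₀) := by
        rw [hm𝔛, add_comm]

lemma map_const_pure {P Q : Type*} (w : Q) (𝔵 : Ultrafilter P) :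
    Ultrafilter.map (fun _ => w) 𝔵 = pure w := by
  refine (eq_of_le_sets fun A hA => ?_).symm
  rw [Ultrafilter.mem_pure] at hA
  rw [Ultrafilter.mem_map]
  have : (fun _ : P => w) ⁻¹' A = Set.univ := by
    ext p; simp [hA]
  rw [this]
  exact Filter.univ_mem

lemma comp_contraction {P Q R' : Type*} {a : Ultrafilter P → P → ℝ≥0∞}
    {b : Ultrafilter Q → Q → ℝ≥0∞} {c : Ultrafilter R' → R' → ℝ≥0∞} {f : P → Q} {g : Q → R'}
    (hf : IsContraction a b f) (hg : IsContraction b c g) : IsContraction a c (g ∘ f) := by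
  intro 𝔵 x
  rw [← Ultrafilter.map_map]
  exact le_trans (hg (Ultrafilter.map f 𝔵) (f x)) (hf 𝔵 x)

section Exponential

variable {Z W : AppSpace}

/-- Currying pointwise: each slice of a contraction on a product is a contraction. -/
lemma curry_pt_contraction (g : W.carrier × X.carrier → Z.carrier)
    (hg : IsContraction (prodConv W X) (conv Z) g) (w : W.carrier) :
    IsContraction (conv X) (conv Z) (fun x => g (w, x)) := by
  intro 𝔵 x
  have hmm : Ultrafilter.map (fun x => g (w, x)) 𝔵 =
      Ultrafilter.map g (Ultrafilter.map (fun x => (w, x)) 𝔵) := by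
    rw [Ultrafilter.map_map]; rfl
  rw [hmm]
  refine le_trans (hg (Ultrafilter.map (fun x => (w, x)) 𝔵) (w, x)) ?_
  unfold prodConv
  rw [Ultrafilter.map_map, Ultrafilter.map_map]
  have h1 : Ultrafilter.map (Prod.fst ∘ fun x : X.carrier => (w, x)) 𝔵 = pure w :=
    map_const_pure w 𝔵
  have h2 : Ultrafilter.map (Prod.snd ∘ fun x : X.carrier => (w, x)) 𝔵 = 𝔵 := by
    refine (eq_of_le_sets fun A hA => ?_).symm
    rw [Ultrafilter.mem_map]
    exact hA
  rw [h1, h2, (isConv_conv W).refl w]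
  simp

variable (hcond : ∀ (𝔛 : Ultrafilter (Ultrafilter X.carrier)) (x₀ : X.carrier) (u v : ℝ≥0∞),
      ⨅ 𝔵 : Ultrafilter X.carrier, (max u (conv X 𝔵 x₀) + max v (uExt (conv X) 𝔛 𝔵)) ≤
        max (u + v) (conv X (mU 𝔛) x₀))

/-- The exponential approach space `Z^X`. -/
noncomputable def expSpace (Z : AppSpace) : AppSpace :=
  ⟨ExpCarrier X Z, distOf (expConv X Z),
    isApproachDistance_distOf ⟨expConv_refl X, expConv_trans X hcond⟩⟩

lemma conv_expSpace (Z : AppSpace) : conv (expSpace X hcond Z) = expConv X Z :=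
  funext₂ (appConv_distOf ⟨expConv_refl X, expConv_trans X hcond⟩)

/-- The transpose of a contraction on a product is a contraction into the exponential. -/
lemma transpose_contraction (g : W.carrier × X.carrier → Z.carrier)
    (hg : IsContraction (prodConv W X) (conv Z) g) :
    IsContraction (conv W) (expConv X Z)
      (fun w => (⟨fun x => g (w, x), curry_pt_contraction X g hg w⟩ : ExpCarrier X Z)) := by
  intro 𝔴₀ w
  set φ : W.carrier → ExpCarrier X Z :=
    fun w => ⟨fun x => g (w, x), curry_pt_contraction X g hg w⟩ with hφ
  rw [expConv_le_iff]
  intro 𝔴 h𝔴 x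
  obtain ⟨𝔴t, h1, h2⟩ := exists_prod_lift φ 𝔴 𝔴₀ (by rw [h𝔴])
  have hev : Ultrafilter.map (evMap X Z) 𝔴 = Ultrafilter.map g 𝔴t := by
    rw [← h1, Ultrafilter.map_map]
    try exact congrArg (fun f => Ultrafilter.map f 𝔴t) (funext fun p => rfl)
  have hsnd : Ultrafilter.map Prod.snd 𝔴 = Ultrafilter.map Prod.snd 𝔴t := by
    rw [← h1, Ultrafilter.map_map]
    try rfl
  rw [hev, hsnd]
  show conv Z (Ultrafilter.map g 𝔴t) (g (w, x)) ≤ _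
  refine le_trans (hg 𝔴t (w, x)) ?_
  unfold prodConv
  rw [h2]

/-- Uncurrying: evaluation of a contraction into the exponential is a contraction. -/
lemma uncurry_contraction (k : W.carrier → ExpCarrier X Z)
    (hk : IsContraction (conv W) (expConv X Z) k) :
    IsContraction (prodConv W X) (conv Z) (fun p => (k p.1).1 p.2) := by
  intro 𝔴 p
  obtain ⟨w₀, x₀⟩ := p
  have hfn : (fun p : W.carrier × X.carrier => (k p.1).1 p.2) =
      evMap X Z ∘ Prod.map k id := rfl
  rw [hfn, ← Ultrafilter.map_map]
  set 𝔴s := Ultrafilter.map (Prod.map k id) 𝔴 with h𝔴s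
  have hspec := expConv_spec X (𝔭 := Ultrafilter.map Prod.fst 𝔴s) (h := k w₀)
    (𝔴 := 𝔴s) rfl x₀
  refine le_trans hspec (max_le ?_ ?_)
  · have hfst : Ultrafilter.map Prod.fst 𝔴s = Ultrafilter.map k (Ultrafilter.map Prod.fst 𝔴) := by
      rw [h𝔴s, Ultrafilter.map_map, Ultrafilter.map_map]
      rfl
    rw [hfst]
    exact le_max_of_le_left (hk (Ultrafilter.map Prod.fst 𝔴) w₀)
  · have hsnd : Ultrafilter.map Prod.snd 𝔴s = Ultrafilter.map Prod.snd 𝔴 := by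
      rw [h𝔴s, Ultrafilter.map_map]
      rfl
    rw [hsnd]
    exact le_max_of_le_right le_rfl

/-- Post-composition is a contraction on exponentials. -/
lemma postcomp_contraction {Z' : AppSpace} (f : Z.carrier → Z'.carrier)
    (hf : IsContraction (conv Z) (conv Z') f) :
    IsContraction (expConv X Z) (expConv X Z')
      (fun k => (⟨f ∘ k.1, comp_contraction k.2 hf⟩ : ExpCarrier X Z')) := by
  intro 𝔭 k₀
  set φ : ExpCarrier X Z → ExpCarrier X Z' :=
    fun k => ⟨f ∘ k.1, comp_contraction k.2 hf⟩ with hφ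
  rw [expConv_le_iff]
  intro 𝔴 h𝔴 x
  obtain ⟨𝔴t, h1, h2⟩ := exists_prod_lift φ 𝔴 𝔭 (by rw [h𝔴])
  have hev : Ultrafilter.map (evMap X Z') 𝔴 =
      Ultrafilter.map f (Ultrafilter.map (evMap X Z) 𝔴t) := by
    rw [← h1, Ultrafilter.map_map, Ultrafilter.map_map]
    congr 1
  have hsnd : Ultrafilter.map Prod.snd 𝔴 = Ultrafilter.map Prod.snd 𝔴t := by
    rw [← h1, Ultrafilter.map_map]
    try rfl
  rw [hev, hsnd]
  show conv Z' (Ultrafilter.map f (Ultrafilter.map (evMap X Z) 𝔴t)) (f (k₀.1 x)) ≤ _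
  refine le_trans (hf (Ultrafilter.map (evMap X Z) 𝔴t) (k₀.1 x)) ?_
  exact le_trans (expConv_spec X h2 x) (max_le (le_max_of_le_left le_rfl)
    (le_max_of_le_right le_rfl))

end Exponential

section Functors

variable (X : AppSpace)

/-- The product functor `(-) × X`. -/
noncomputable def Fprod : AppSpace ⥤ AppSpace where
  obj Z := prodSpace Z X
  map {A B} f := ⟨fun p => (f.1 p.1, p.2),
    pair_contraction (W := prodSpace A X) (f.1 ∘ Prod.fst) Prod.snd
      (comp_contraction (fst_contraction A X) f.2) (snd_contraction A X)⟩
  map_id A := by apply Subtype.ext; funext p; rfl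
  map_comp f g := by apply Subtype.ext; funext p; rfl

variable (hcond : ∀ (𝔛 : Ultrafilter (Ultrafilter X.carrier)) (x₀ : X.carrier) (u v : ℝ≥0∞),
      ⨅ 𝔵 : Ultrafilter X.carrier, (max u (conv X 𝔵 x₀) + max v (uExt (conv X) 𝔛 𝔵)) ≤
        max (u + v) (conv X (mU 𝔛) x₀))

/-- The exponential functor `(-)^X`. -/
noncomputable def Rexp : AppSpace ⥤ AppSpace where
  obj Z := expSpace X hcond Z
  map {A B} f := ⟨fun k => ⟨f.1 ∘ k.1, comp_contraction k.2 f.2⟩, by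
    have h := postcomp_contraction X (Z := A) (Z' := B) f.1 f.2
    show IsContraction (conv (expSpace X hcond A)) (conv (expSpace X hcond B)) _
    rw [conv_expSpace, conv_expSpace]
    exact h⟩
  map_id A := by
    apply Subtype.ext; funext k; apply Subtype.ext; rfl
  map_comp f g := by
    apply Subtype.ext; funext k; apply Subtype.ext; rfl

/-- The exponential adjunction `(-) × X ⊣ (-)^X`. -/
noncomputable def adjExp : Fprod X ⊣ Rexp X hcond :=
  Adjunction.mkOfHomEquiv
    { homEquiv := fun A B =>
        { toFun := fun g => ⟨fun w => ⟨fun x => g.1 (w, x),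
            curry_pt_contraction X g.1 (conv_prodSpace A X ▸ g.2) w⟩, by
              have h := transpose_contraction X (W := A) (Z := B) g.1
                (conv_prodSpace A X ▸ g.2)
              show IsContraction (conv A) (conv (expSpace X hcond B)) _
              rw [conv_expSpace]
              exact h⟩
          invFun := fun k => ⟨fun p => (k.1 p.1).1 p.2, by
            have hk : IsContraction (conv A) (expConv X B) k.1 := by
              have hh : IsContraction (conv A) (conv (expSpace X hcond B)) k.1 := k.2
              rwa [conv_expSpace] at hh
            have h := uncurry_contraction X (W := A) (Z := B) k.1 hk
            show IsContraction (conv (prodSpace A X)) (conv B) _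
            rw [conv_prodSpace]
            exact h⟩
          left_inv := fun g => by apply Subtype.ext; funext p; rfl
          right_inv := fun k => by
            apply Subtype.ext; funext w; apply Subtype.ext; rfl }
      homEquiv_naturality_left_symm := fun f g => by
        apply Subtype.ext; funext p; rfl
      homEquiv_naturality_right := fun g h => by
        apply Subtype.ext; funext w; apply Subtype.ext; rfl }

end Functors

end Cat

end AppExp

/-- If the ultrafilter convergence `a` of an approach space `(X, δ)` satisfies
`(u + v) ∨ a (m_X 𝔛) x₀ ≥ ⨅_{𝔵 ∈ U X} ((u ∨ a 𝔵 x₀) + (v ∨ Ū a 𝔛 𝔵))` for all `𝔛`, `x₀`, `u`, `v`,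
then `X` is exponentiable in `App`. -/
theorem exponentiable_sufficient (X : Type) (δ : Set X → X → ℝ≥0∞)
    (hδ : IsApproachDistance δ)
    (a : Ultrafilter X → X → ℝ≥0∞) (ha : ∀ (𝔵 : Ultrafilter X) (x : X), a 𝔵 x = ⨆ A ∈ 𝔵, δ A x)
    (hcond : ∀ (𝔛 : Ultrafilter (Ultrafilter X)) (x₀ : X) (u v : ℝ≥0∞),
      ⨅ 𝔵 : Ultrafilter X, (max u (a 𝔵 x₀) + max v (uExt a 𝔛 𝔵)) ≤
        max (u + v) (a (mU 𝔛) x₀)) :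
    AppExponentiable ⟨X, δ, hδ⟩ := by
  classical
  set X₀ : AppSpace := ⟨X, δ, hδ⟩ with hX₀
  have hconv : AppExp.conv X₀ = a := by
    funext 𝔵 x
    rw [ha]
    rfl
  have hc : ∀ (𝔛 : Ultrafilter (Ultrafilter X₀.carrier)) (x₀ : X₀.carrier) (u v : ℝ≥0∞),
      ⨅ 𝔵 : Ultrafilter X₀.carrier,
          (max u (AppExp.conv X₀ 𝔵 x₀) + max v (uExt (AppExp.conv X₀) 𝔛 𝔵)) ≤
        max (u + v) (AppExp.conv X₀ (mU 𝔛) x₀) := by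
    intro 𝔛 x₀ u v
    rw [hconv]
    exact hcond 𝔛 x₀ u v
  refine ⟨AppExp.Fprod X₀, AppExp.Rexp X₀ hc, AppExp.adjExp X₀ hc,
    fun Z => ⟨Prod.fst, AppExp.fst_contraction Z X₀⟩,
    fun Z => ⟨Prod.snd, AppExp.snd_contraction Z X₀⟩, ?_, ?_⟩
  · intro Z W f g
    refine ⟨⟨fun w => (f.1 w, g.1 w), AppExp.pair_contraction f.1 g.1 f.2 g.2⟩,
      ⟨Subtype.ext rfl, Subtype.ext rfl⟩, ?_⟩
    rintro h ⟨h1, h2⟩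
    apply Subtype.ext
    funext w
    have e1 : (h.1 w).1 = f.1 w := congrFun (congrArg Subtype.val h1) w
    have e2 : (h.1 w).2 = g.1 w := congrFun (congrArg Subtype.val h2) w
    exact Prod.ext e1 e2
  · intro Z W h
    exact ⟨Subtype.ext rfl, Subtype.ext rfl⟩

end
end

section
/- Let X be a set carrying an approach distance with ultrafilter convergence a. Then X is exponentiable in the category App of approach spaces and contractions if and only if the numerical relation d : U([0,∞]^X) ⇸ [0,∞]^X defined by d(𝔭,φ) = inf {u ∈ ℝ≥0∞ | ∀ 𝔮 ∈ U([0,∞]^X × X) with U π₁ 𝔮 = 𝔭 and ∀ x ∈ X, max u (a (U π₂ 𝔮) x) + ξ(U ev 𝔮) ≥ φ x} is transitive (so that [0,∞]^X with d is itself an approach space). -/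
open scoped ENNReal
open CategoryTheory

noncomputable section

/-- The approach convergence on `[0,∞]`: `λ(𝔳, v) = v ⊖ ξ 𝔳` (truncated subtraction). -/
def ennConv (𝔳 : Ultrafilter ℝ≥0∞) (v : ℝ≥0∞) : ℝ≥0∞ :=
  v - xi 𝔳

/-- The set `[0,∞]^X` of contractions `φ : X → [0,∞]`, for a convergence `a` on `X`. -/
def Contractions {X : Type*} (a : Ultrafilter X → X → ℝ≥0∞) : Type _ :=
  {φ : X → ℝ≥0∞ // IsContraction a ennConv φ}

/-- The evaluation map `ev : [0,∞]^X × X → [0,∞]`. -/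
def evMap {X : Type*} (a : Ultrafilter X → X → ℝ≥0∞) : Contractions a × X → ℝ≥0∞ :=
  fun p => p.1.1 p.2

/-- The exponential convergence `d` on `[0,∞]^X`:
`d(𝔭,φ) = inf {u | ∀ 𝔮 ∈ U([0,∞]^X × X) with U π₁ 𝔮 = 𝔭, ∀ x ∈ X,`
`u ∨ a (U π₂ 𝔮) x + ξ (U ev 𝔮) ≥ φ x}`. -/
def dExp {X : Type*} (a : Ultrafilter X → X → ℝ≥0∞) :
    Ultrafilter (Contractions a) → Contractions a → ℝ≥0∞ :=
  fun 𝔭 φ => sInf {u : ℝ≥0∞ | ∀ 𝔮 : Ultrafilter (Contractions a × X),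
    Ultrafilter.map Prod.fst 𝔮 = 𝔭 → ∀ x : X,
      φ.1 x ≤ max u (a (Ultrafilter.map Prod.snd 𝔮) x) + xi (Ultrafilter.map (evMap a) 𝔮)}

/-- A convergence relation `a : U X ⇸ X` is transitive:
`Ū a 𝔛 𝔵 + a 𝔵 x ≥ a (m_X 𝔛) x`. -/
def IsTransitiveConv {X : Type*} (a : Ultrafilter X → X → ℝ≥0∞) : Prop :=
  ∀ (𝔛 : Ultrafilter (Ultrafilter X)) (𝔵 : Ultrafilter X) (x : X),
    a (mU 𝔛) x ≤ uExt a 𝔛 𝔵 + a 𝔵 x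

/-- A convergence relation `a : U X ⇸ X` is reflexive: `a (e_X x) x = 0`. -/
def IsReflexiveConv {X : Type*} (a : Ultrafilter X → X → ℝ≥0∞) : Prop :=
  ∀ x : X, a (pure x : Ultrafilter X) x = 0

section Util
open Filter Set Ultrafilter

lemma le_add_of_forall_gt {c u v : ℝ≥0∞} (h : ∀ u', u < u' → c ≤ u' + v) : c ≤ u + v := by
  rcases eq_or_ne u ⊤ with hu | hu
  · simp [hu]
  refine ENNReal.le_of_forall_pos_le_add fun ε hε _ => ?_
  calc c ≤ (u + ε) + v := h _ (ENNReal.lt_add_right hu (by exact_mod_cast hε.ne'))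
    _ = u + v + ε := by ring

lemma umap_congr {α β : Type*} {𝔵 : Ultrafilter α} {f g : α → β} {S : Set α} (hS : S ∈ 𝔵)
    (h : ∀ x ∈ S, f x = g x) : Ultrafilter.map f 𝔵 = Ultrafilter.map g 𝔵 :=
  Ultrafilter.coe_injective (Filter.map_congr (by filter_upwards [hS] using h))

lemma umem_of_forall_inter {α : Type*} {𝔵 : Ultrafilter α} {s : Set α}
    (h : ∀ t ∈ 𝔵, (t ∩ s).Nonempty) : s ∈ 𝔵 := by
  by_contra hs
  rcases h sᶜ (Ultrafilter.compl_mem_iff_notMem.2 hs) with ⟨x, hx1, hx2⟩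
  exact hx1 hx2

lemma eq_pure_of_singleton_mem {α : Type*} {𝔵 : Ultrafilter α} {x : α} (h : {x} ∈ 𝔵) :
    𝔵 = pure x := by
  rcases Ultrafilter.eq_pure_of_finite_mem (Set.finite_singleton x) h with ⟨y, hy, rfl⟩
  rcases hy; rfl

lemma mem_mU {X : Type*} {𝔛 : Ultrafilter (Ultrafilter X)} {s : Set X} :
    s ∈ mU 𝔛 ↔ {𝔞 : Ultrafilter X | s ∈ 𝔞} ∈ 𝔛 := by
  change s ∈ (𝔛.bind id : Filter X) ↔ _
  rw [show ((𝔛.bind id : Ultrafilter X) : Filter X) = Filter.bind ↑𝔛 fun x => ↑(id x : Ultrafilter X) from rfl]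
  rw [Filter.mem_bind']
  rfl

lemma mU_map {X Y : Type*} (f : X → Y) (𝔛 : Ultrafilter (Ultrafilter X)) :
    mU (Ultrafilter.map (Ultrafilter.map f) 𝔛) = Ultrafilter.map f (mU 𝔛) := by
  ext s
  rw [mem_mU, Ultrafilter.mem_map, Ultrafilter.mem_map, mem_mU]
  rfl

lemma mU_pure {X : Type*} (𝔵 : Ultrafilter X) : mU (pure 𝔵) = 𝔵 := by
  ext s; rw [mem_mU]; rfl

lemma mU_map_pure {X : Type*} (𝔵 : Ultrafilter X) : mU (Ultrafilter.map pure 𝔵) = 𝔵 := by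
  ext s; rw [mem_mU, Ultrafilter.mem_map]; simp

/-- The ultrafilter functor weakly preserves the pullback of `fst : β × γ → β` along `g`. -/
lemma exists_uf_lift {α β γ : Type*} (g : α → β) (𝔭 : Ultrafilter α) (𝔮' : Ultrafilter (β × γ))
    (h : Ultrafilter.map Prod.fst 𝔮' = Ultrafilter.map g 𝔭) :
    ∃ 𝔮 : Ultrafilter (α × γ), Ultrafilter.map Prod.fst 𝔮 = 𝔭 ∧
      Ultrafilter.map (Prod.map g id) 𝔮 = 𝔮' := by
  have hne : (Filter.comap Prod.fst (𝔭 : Filter α) ⊓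
      Filter.comap (Prod.map g id) (𝔮' : Filter (β × γ))).NeBot := by
    rw [← Filter.forall_mem_nonempty_iff_neBot]
    intro s hs
    rcases Filter.mem_inf_iff.1 hs with ⟨t₁, ht₁, t₂, ht₂, rfl⟩
    rcases Filter.mem_comap.1 ht₁ with ⟨P, hP, hPt⟩
    rcases Filter.mem_comap.1 ht₂ with ⟨Q, hQ, hQt⟩
    have h1 : Prod.fst '' Q ∈ Ultrafilter.map Prod.fst 𝔮' :=
      Ultrafilter.mem_map.2 (mem_of_superset hQ (subset_preimage_image _ _))
    rw [h] at h1
    have h2 : P ∩ g ⁻¹' (Prod.fst '' Q) ∈ 𝔭 := inter_mem hP (Ultrafilter.mem_map.1 h1)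
    rcases Ultrafilter.nonempty_of_mem h2 with ⟨a, haP, haQ⟩
    rcases haQ with ⟨⟨b, c⟩, hbc, hba⟩
    refine ⟨(a, c), hPt haP, hQt ?_⟩
    show (g a, c) ∈ Q
    cases hba; exact hbc
  set F := Filter.comap Prod.fst (𝔭 : Filter α) ⊓ Filter.comap (Prod.map g id) (𝔮' : Filter (β × γ))
  refine ⟨Ultrafilter.of F, ?_, ?_⟩
  · have h1 : (Ultrafilter.map Prod.fst (Ultrafilter.of F) : Filter α) ≤ 𝔭 := by
      calc (Ultrafilter.map Prod.fst (Ultrafilter.of F) : Filter α)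
          ≤ Filter.map Prod.fst F := Filter.map_mono (Ultrafilter.of_le F)
        _ ≤ Filter.map Prod.fst (Filter.comap Prod.fst (𝔭 : Filter α)) :=
            Filter.map_mono inf_le_left
        _ ≤ 𝔭 := Filter.map_comap_le
    exact Ultrafilter.coe_injective (𝔭.unique h1)
  · have h1 : (Ultrafilter.map (Prod.map g id) (Ultrafilter.of F) : Filter (β × γ)) ≤ 𝔮' := by
      calc (Ultrafilter.map (Prod.map g id) (Ultrafilter.of F) : Filter (β × γ))
          ≤ Filter.map (Prod.map g id) F := Filter.map_mono (Ultrafilter.of_le F)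
        _ ≤ Filter.map (Prod.map g id) (Filter.comap (Prod.map g id) (𝔮' : Filter (β × γ))) :=
            Filter.map_mono inf_le_right
        _ ≤ 𝔮' := Filter.map_comap_le
    exact Ultrafilter.coe_injective (𝔮'.unique h1)

lemma xi_pure (v : ℝ≥0∞) : xi (pure v) = v := by
  refine le_antisymm (iSup₂_le fun A hA => iInf₂_le v hA) ?_
  refine le_trans ?_ (le_iSup₂ (f := fun A (_ : A ∈ (pure v : Ultrafilter ℝ≥0∞)) => ⨅ u ∈ A, u)
    {v} rfl)
  simp

lemma mem_of_xi_lt {𝔳 : Ultrafilter ℝ≥0∞} {t : ℝ≥0∞} (h : xi 𝔳 < t) : {u | u ≤ t} ∈ 𝔳 := by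
  by_contra hs
  have h2 : {u | u ≤ t}ᶜ ∈ 𝔳 := Ultrafilter.compl_mem_iff_notMem.2 hs
  have h3 : (⨅ u ∈ {u : ℝ≥0∞ | u ≤ t}ᶜ, u) ≤ xi 𝔳 :=
    le_iSup₂ (f := fun A (_ : A ∈ 𝔳) => ⨅ u ∈ A, u) _ h2
  have h4 : t ≤ ⨅ u ∈ {u : ℝ≥0∞ | u ≤ t}ᶜ, u :=
    le_iInf₂ fun u hu => le_of_lt (lt_of_not_ge hu)
  exact absurd (h4.trans_lt (h3.trans_lt h)) (lt_irrefl t)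

lemma iInf_le_uExt {X Y : Type*} (r : X → Y → ℝ≥0∞) {𝔵 : Ultrafilter X} {𝔶 : Ultrafilter Y}
    {A : Set X} {B : Set Y} (hA : A ∈ 𝔵) (hB : B ∈ 𝔶) :
    (⨅ x ∈ A, ⨅ y ∈ B, r x y) ≤ uExt r 𝔵 𝔶 :=
  le_trans (le_iSup₂ (f := fun B (_ : B ∈ 𝔶) => ⨅ x ∈ A, ⨅ y ∈ B, r x y) B hB)
    (le_iSup₂ (f := fun A (_ : A ∈ 𝔵) => ⨆ B ∈ 𝔶, ⨅ x ∈ A, ⨅ y ∈ B, r x y) A hA)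

lemma uExt_le {X Y : Type*} {r : X → Y → ℝ≥0∞} {𝔵 : Ultrafilter X} {𝔶 : Ultrafilter Y}
    {u : ℝ≥0∞} (h : ∀ A ∈ 𝔵, ∀ B ∈ 𝔶, (⨅ x ∈ A, ⨅ y ∈ B, r x y) ≤ u) : uExt r 𝔵 𝔶 ≤ u :=
  iSup₂_le fun A hA => iSup₂_le fun B hB => h A hA B hB

lemma uExt_map_map_le {α β α' β' : Type*} (F : α → α') (e : β → β') (r : α → β → ℝ≥0∞)
    (r' : α' → β' → ℝ≥0∞) (h : ∀ x y, r' (F x) (e y) ≤ r x y) (𝔛 : Ultrafilter α)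
    (𝔭 : Ultrafilter β) :
    uExt r' (Ultrafilter.map F 𝔛) (Ultrafilter.map e 𝔭) ≤ uExt r 𝔛 𝔭 := by
  refine uExt_le fun A hA B hB => ?_
  refine le_trans ?_ (iInf_le_uExt r (Ultrafilter.mem_map.1 hA) (Ultrafilter.mem_map.1 hB))
  refine le_iInf₂ fun x hx => le_iInf₂ fun y hy => ?_
  exact le_trans (iInf₂_le (F x) hx) (le_trans (iInf₂_le (e y) hy) (h x y))

end Util

section Approach
open Filter Set Ultrafilter
variable {T : Type*} {δ : Set T → T → ℝ≥0∞}

lemma IsApproachDistance.antitone (hδ : IsApproachDistance δ) {A B : Set T} (h : A ⊆ B) (x : T) :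
    δ B x ≤ δ A x := by
  have h2 := hδ.dist_union A B x
  rw [Set.union_eq_self_of_subset_left h] at h2
  rw [h2]; exact min_le_left _ _

lemma le_appConv {A : Set T} {𝔵 : Ultrafilter T} (hA : A ∈ 𝔵) (x : T) : δ A x ≤ appConv δ 𝔵 x :=
  le_iSup₂ (f := fun A (_ : A ∈ 𝔵) => δ A x) A hA

lemma appConv_le {𝔵 : Ultrafilter T} {x : T} {u : ℝ≥0∞} (h : ∀ A ∈ 𝔵, δ A x ≤ u) :
    appConv δ 𝔵 x ≤ u := iSup₂_le h

lemma appConv_pure (hδ : IsApproachDistance δ) (x : T) : appConv δ (pure x) x = 0 := by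
  refine le_antisymm (appConv_le fun A hA => ?_) (zero_le)
  have hx : x ∈ A := hA
  calc δ A x ≤ δ {x} x := hδ.antitone (singleton_subset_iff.2 hx) x
    _ = 0 := hδ.dist_singleton x

lemma appConv_reflexive (hδ : IsApproachDistance δ) : IsReflexiveConv (appConv δ) :=
  appConv_pure hδ

lemma appConv_transitive (hδ : IsApproachDistance δ) : IsTransitiveConv (appConv δ) := by
  intro 𝔛 𝔵 x
  refine appConv_le fun A hA => ?_
  refine le_add_of_forall_gt fun u' hu' => ?_
  have hAeps : {y | δ A y ≤ u'} ∈ 𝔵 := by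
    by_contra hc
    have hcc : {y | δ A y ≤ u'}ᶜ ∈ 𝔵 := Ultrafilter.compl_mem_iff_notMem.2 hc
    have hAhat : {𝔞 : Ultrafilter T | A ∈ 𝔞} ∈ 𝔛 := mem_mU.1 hA
    have h3 : u' ≤ uExt (appConv δ) 𝔛 𝔵 := by
      refine le_trans ?_ (iInf_le_uExt _ hAhat hcc)
      refine le_iInf₂ fun 𝔞 h𝔞 => le_iInf₂ fun y hy => ?_
      exact le_trans (le_of_lt (lt_of_not_ge hy)) (le_appConv h𝔞 y)
    exact absurd (h3.trans_lt hu') (lt_irrefl _)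
  calc δ A x ≤ δ {y | δ A y ≤ u'} x + u' := hδ.dist_closure A x u'
    _ ≤ appConv δ 𝔵 x + u' := add_le_add_left (le_appConv hAeps x) _
    _ = u' + appConv δ 𝔵 x := add_comm _ _

lemma deltaA_contraction (hδ : IsApproachDistance δ) (A : Set T) :
    IsContraction (appConv δ) ennConv (fun z => δ A z) := by
  intro 𝔷 z
  show δ A z - xi (Ultrafilter.map (fun z => δ A z) 𝔷) ≤ appConv δ 𝔷 z
  rw [tsub_le_iff_right, add_comm]
  refine le_add_of_forall_gt fun t' ht' => ?_
  have hmem : {y | δ A y ≤ t'} ∈ 𝔷 := Ultrafilter.mem_map.1 (mem_of_xi_lt ht')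
  calc δ A z ≤ δ {y | δ A y ≤ t'} z + t' := hδ.dist_closure A z t'
    _ ≤ appConv δ 𝔷 z + t' := add_le_add_left (le_appConv hmem z) _
    _ = t' + appConv δ 𝔷 z := add_comm _ _

lemma appConv_eq_sup_delta (hδ : IsApproachDistance δ) (𝔷 : Ultrafilter T) (z : T) :
    appConv δ 𝔷 z = ⨆ A : Set T, ennConv (Ultrafilter.map (fun y => δ A y) 𝔷) (δ A z) := by
  refine le_antisymm (appConv_le fun A hA => ?_) (iSup_le fun A => deltaA_contraction hδ A 𝔷 z)
  refine le_trans ?_ (le_iSup (fun A => ennConv (Ultrafilter.map (fun y => δ A y) 𝔷) (δ A z)) A)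
  have hmap : Ultrafilter.map (fun y => δ A y) 𝔷 = pure 0 := by
    have h2 : Ultrafilter.map (fun y => δ A y) 𝔷 = Ultrafilter.map (fun _ => (0:ℝ≥0∞)) 𝔷 :=
      umap_congr hA fun y hy => le_antisymm
        (le_trans (hδ.antitone (singleton_subset_iff.2 hy) y) (le_of_eq (hδ.dist_singleton y)))
        (zero_le)
    rw [h2]
    exact Ultrafilter.coe_injective (by rw [show ((pure (0:ℝ≥0∞) : Ultrafilter ℝ≥0∞) : Filter ℝ≥0∞) = pure 0 from rfl]; exact Filter.map_const)
  rw [show ennConv (Ultrafilter.map (fun y => δ A y) 𝔷) (δ A z)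
      = δ A z - xi (Ultrafilter.map (fun y => δ A y) 𝔷) from rfl, hmap, xi_pure, tsub_zero]

end Approach

section Lam
open Filter Set Ultrafilter

lemma ennreal_sub_sup (a b c : ℝ≥0∞) : a - (b ⊔ c) = min (a - b) (a - c) := by
  rcases le_total b c with h | h
  · rw [sup_eq_right.2 h, min_eq_right (tsub_le_tsub_left h a)]
  · rw [sup_eq_left.2 h, min_eq_left (tsub_le_tsub_left h a)]

/-- The canonical approach distance on `[0,∞]`. -/
def distLam : Set ℝ≥0∞ → ℝ≥0∞ → ℝ≥0∞ := fun A v =>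
  haveI := Classical.propDecidable (A = ∅)
  if A = ∅ then ∞ else v - sSup A

lemma distLam_of_ne {A : Set ℝ≥0∞} (hA : A ≠ ∅) (v : ℝ≥0∞) : distLam A v = v - sSup A :=
  if_neg hA

lemma xi_eq_iInf_sSup (𝔳 : Ultrafilter ℝ≥0∞) : (⨅ A ∈ 𝔳, sSup A) = xi 𝔳 := by
  refine le_antisymm ?_ (iSup₂_le fun B hB => le_iInf₂ fun A hA => ?_)
  · by_contra hc
    rcases exists_between (lt_of_not_ge hc) with ⟨s', hs1, hs2⟩
    have hmem : {u : ℝ≥0∞ | u ≤ s'} ∈ 𝔳 := mem_of_xi_lt hs1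
    have h3 : (⨅ A ∈ 𝔳, sSup A) ≤ s' :=
      le_trans (iInf₂_le {u : ℝ≥0∞ | u ≤ s'} hmem) (sSup_le fun u hu => hu)
    exact absurd (h3.trans_lt hs2) (lt_irrefl _)
  · rcases Ultrafilter.nonempty_of_mem (inter_mem hA hB) with ⟨u, huA, huB⟩
    exact le_trans (iInf₂_le u huB) (le_sSup huA)

lemma isApproachDistance_distLam : IsApproachDistance distLam := by
  constructor
  · intro x; simp [distLam]
  · intro x; simp [distLam]
  · intro A B x
    by_cases hA : A = ∅
    · subst hA; rw [Set.empty_union]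
      by_cases hB : B = ∅
      · subst hB; simp [distLam]
      · rw [distLam_of_ne hB, show distLam ∅ x = ⊤ from if_pos rfl, min_eq_right le_top]
    by_cases hB : B = ∅
    · subst hB; simp [distLam, hA]
    · have hAB : A ∪ B ≠ ∅ := fun h =>
        hA (Set.eq_empty_of_subset_empty (h ▸ Set.subset_union_left))
      simp only [distLam, if_neg hA, if_neg hB, if_neg hAB, sSup_union]
      exact ennreal_sub_sup x (sSup A) (sSup B)
  · intro A x ε
    rcases eq_or_ne ε ∞ with rfl | hε
    · exact le_trans le_top (le_of_eq (by rw [add_top]))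
    by_cases hA : A = ∅
    · subst hA
      have h1 : {y | distLam (∅ : Set ℝ≥0∞) y ≤ ε} = ∅ := by
        ext y; simp [distLam, hε]
      rw [h1]
      simp [distLam]
    · have hsub : A ⊆ {y | distLam A y ≤ ε} := fun y hy => by
        show distLam A y ≤ ε
        rw [distLam_of_ne hA, tsub_eq_zero_of_le (le_sSup hy)]; exact zero_le
      have hne : {y | distLam A y ≤ ε} ≠ ∅ := fun h =>
        hA (Set.eq_empty_of_subset_empty (h ▸ hsub))
      rw [distLam_of_ne hA, distLam_of_ne hne]
      have h1 : sSup {y | distLam A y ≤ ε} ≤ sSup A + ε := by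
        refine sSup_le fun y hy => ?_
        rw [Set.mem_setOf_eq, distLam_of_ne hA] at hy
        rw [add_comm]; exact tsub_le_iff_right.1 hy
      calc x - sSup A ≤ (x - (sSup A + ε)) + ε := by
            rw [tsub_le_iff_right, add_assoc, add_comm ε (sSup A)]
            exact le_tsub_add
        _ ≤ (x - sSup {y | distLam A y ≤ ε}) + ε :=
            add_le_add_left (tsub_le_tsub_left h1 x) _

lemma appConv_distLam : appConv distLam = ennConv := by
  funext 𝔳 v
  have h1 : appConv distLam 𝔳 v = ⨆ A ∈ 𝔳, (v - sSup A) := by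
    refine iSup_congr fun A => ?_
    refine iSup_congr fun hA => ?_
    exact distLam_of_ne (Set.nonempty_iff_ne_empty.1 (Ultrafilter.nonempty_of_mem hA)) v
  rw [h1]
  have h2 : (⨆ A ∈ 𝔳, (v - sSup A)) = v - ⨅ A ∈ 𝔳, sSup A := by
    rw [ENNReal.sub_iInf]
    exact iSup_congr fun A => (ENNReal.sub_iInf).symm
  rw [h2, xi_eq_iInf_sSup]
  rfl

end Lam

section DistOf
open Filter Set Ultrafilter
variable {T : Type*}

/-- The approach distance associated to a (reflexive, transitive) convergence. -/
def distOf (c : Ultrafilter T → T → ℝ≥0∞) : Set T → T → ℝ≥0∞ :=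
  fun A x => ⨅ 𝔶 : Ultrafilter T, ⨅ _ : A ∈ 𝔶, c 𝔶 x

lemma distOf_le {c : Ultrafilter T → T → ℝ≥0∞} {A : Set T} {𝔶 : Ultrafilter T} (hA : A ∈ 𝔶)
    (x : T) : distOf c A x ≤ c 𝔶 x :=
  le_trans (iInf_le _ 𝔶) (iInf_le _ hA)

lemma le_distOf {c : Ultrafilter T → T → ℝ≥0∞} {A : Set T} {x : T} {u : ℝ≥0∞}
    (h : ∀ 𝔶 : Ultrafilter T, A ∈ 𝔶 → u ≤ c 𝔶 x) : u ≤ distOf c A x :=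
  le_iInf fun 𝔶 => le_iInf fun hA => h 𝔶 hA

lemma exists_of_distOf_lt {c : Ultrafilter T → T → ℝ≥0∞} {A : Set T} {x : T} {t : ℝ≥0∞}
    (h : distOf c A x < t) : ∃ 𝔶 : Ultrafilter T, A ∈ 𝔶 ∧ c 𝔶 x < t := by
  rcases iInf_lt_iff.1 h with ⟨𝔶, h𝔶⟩
  rcases iInf_lt_iff.1 h𝔶 with ⟨hA𝔶, h2⟩
  exact ⟨𝔶, hA𝔶, h2⟩

lemma distOf_self {c : Ultrafilter T → T → ℝ≥0∞} (hrefl : IsReflexiveConv c) {A : Set T} {y : T}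
    (hy : y ∈ A) : distOf c A y = 0 :=
  le_antisymm (le_trans (distOf_le (show A ∈ (pure y : Ultrafilter T) from hy) y)
    (le_of_eq (hrefl y))) (zero_le)

lemma distOf_empty (c : Ultrafilter T → T → ℝ≥0∞) (x : T) : distOf c (∅ : Set T) x = ∞ :=
  le_antisymm le_top (le_distOf fun 𝔶 h =>
    absurd (Ultrafilter.nonempty_of_mem h) (by simp))

lemma isApproachDistance_distOf {c : Ultrafilter T → T → ℝ≥0∞} (hrefl : IsReflexiveConv c)
    (htrans : IsTransitiveConv c) : IsApproachDistance (distOf c) := by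
  constructor
  · intro x; exact distOf_self hrefl rfl
  · intro x; exact distOf_empty c x
  · intro A B x
    refine le_antisymm (le_min ?_ ?_) ?_
    · exact le_iInf fun 𝔶 => le_iInf fun hA => distOf_le (mem_of_superset hA Set.subset_union_left) x
    · exact le_iInf fun 𝔶 => le_iInf fun hB => distOf_le (mem_of_superset hB Set.subset_union_right) x
    · refine le_distOf fun 𝔶 hAB => ?_
      rcases (Ultrafilter.union_mem_iff (f := 𝔶)).1 hAB with h | h
      · exact le_trans (min_le_left _ _) (distOf_le h x)
      · exact le_trans (min_le_right _ _) (distOf_le h x)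
  · intro A x ε
    by_cases hA : A = ∅
    · subst hA
      by_cases hε : {y | distOf c (∅ : Set T) y ≤ ε} = ∅
      · rw [hε]; exact le_self_add
      · have : ε = ∞ := by
          rcases Set.nonempty_iff_ne_empty.2 hε with ⟨y, hy⟩
          rw [Set.mem_setOf_eq, distOf_empty] at hy
          exact le_antisymm le_top hy
        rw [this, add_top]; exact le_top
    have hAne : A.Nonempty := Set.nonempty_iff_ne_empty.2 hA
    rcases hAne with ⟨a₀, ha₀⟩
    rw [add_comm]
    refine le_add_of_forall_gt fun t1 ht1 => ?_
    rw [add_comm]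
    refine le_add_of_forall_gt fun t2 ht2 => ?_
    rcases eq_or_ne t1 ∞ with rfl | ht1top
    · simp
    rcases eq_or_ne t2 ∞ with rfl | ht2top
    · simp
    -- choose a witness ultrafilter for the ε-enlargement
    rcases exists_of_distOf_lt ht2 with ⟨𝔶, h𝔶mem, h𝔶lt⟩
    -- choose ultrafilters witnessing `distOf c A y ≤ ε < t1` for points of the enlargement
    have hch : ∀ y : T, ∃ 𝔞 : Ultrafilter T, A ∈ 𝔞 ∧ (distOf c A y < t1 → c 𝔞 y < t1) := by
      intro y
      by_cases hy : distOf c A y < t1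
      · rcases exists_of_distOf_lt hy with ⟨𝔞, h1, h2⟩
        exact ⟨𝔞, h1, fun _ => h2⟩
      · exact ⟨pure a₀, ha₀, fun h => absurd h hy⟩
    choose 𝔞 h𝔞A h𝔞lt using hch
    have hXA : A ∈ mU (Ultrafilter.map 𝔞 𝔶) := by
      rw [mem_mU]
      refine Ultrafilter.mem_map.2 ?_
      have : (𝔞 ⁻¹' {𝔟 : Ultrafilter T | A ∈ 𝔟}) = Set.univ := by
        ext y; simp [h𝔞A y]
      rw [this]; exact univ_mem
    have htr := htrans (Ultrafilter.map 𝔞 𝔶) 𝔶 x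
    have huext : uExt c (Ultrafilter.map 𝔞 𝔶) 𝔶 ≤ t1 := by
      refine uExt_le fun 𝒜 h𝒜 B hB => ?_
      have h1 : 𝔞 ⁻¹' 𝒜 ∈ 𝔶 := Ultrafilter.mem_map.1 h𝒜
      rcases Ultrafilter.nonempty_of_mem (inter_mem (inter_mem h1 hB) h𝔶mem) with ⟨y, ⟨hy1, hy2⟩, hy3⟩
      have h2 : c (𝔞 y) y < t1 := h𝔞lt y (lt_of_le_of_lt hy3 ht1)
      exact le_trans (iInf₂_le (𝔞 y) hy1) (le_trans (iInf₂_le y hy2) h2.le)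
    calc distOf c A x ≤ c (mU (Ultrafilter.map 𝔞 𝔶)) x := distOf_le hXA x
      _ ≤ uExt c (Ultrafilter.map 𝔞 𝔶) 𝔶 + c 𝔶 x := htr
      _ ≤ t1 + t2 := add_le_add huext h𝔶lt.le
      _ = t2 + t1 := add_comm _ _

lemma appConv_distOf {c : Ultrafilter T → T → ℝ≥0∞} (hrefl : IsReflexiveConv c)
    (htrans : IsTransitiveConv c) : appConv (distOf c) = c := by
  funext 𝔵 x
  refine le_antisymm (appConv_le fun A hA => distOf_le hA x) ?_
  by_contra hc
  rcases exists_between (lt_of_not_ge hc) with ⟨u', h1, h2⟩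
  set 𝒴 : Set T → Set (Ultrafilter T) := fun A => {𝔶 | A ∈ 𝔶 ∧ c 𝔶 x ≤ u'} with h𝒴
  have hne : ∀ A ∈ 𝔵, (𝒴 A).Nonempty := by
    intro A hA
    have hlt : distOf c A x < u' := lt_of_le_of_lt (le_appConv hA x) h1
    rcases exists_of_distOf_lt hlt with ⟨𝔶, hy1, hy2⟩
    exact ⟨𝔶, hy1, hy2.le⟩
  haveI hNe : Nonempty {A // A ∈ 𝔵} := ⟨⟨Set.univ, univ_mem⟩⟩
  haveI : Nonempty (Ultrafilter T) := ⟨(hne Set.univ univ_mem).some⟩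
  have hdir : Directed (· ≥ ·) fun A : {A // A ∈ 𝔵} => (𝓟 (𝒴 A.1) : Filter (Ultrafilter T)) := by
    intro A B
    refine ⟨⟨A.1 ∩ B.1, inter_mem A.2 B.2⟩, ?_, ?_⟩
    · exact principal_mono.2 fun 𝔶 h𝔶 => ⟨mem_of_superset h𝔶.1 Set.inter_subset_left, h𝔶.2⟩
    · exact principal_mono.2 fun 𝔶 h𝔶 => ⟨mem_of_superset h𝔶.1 Set.inter_subset_right, h𝔶.2⟩
  haveI hnb : (⨅ A : {A // A ∈ 𝔵}, (𝓟 (𝒴 A.1) : Filter (Ultrafilter T))).NeBot :=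
    iInf_neBot_of_directed hdir fun A => Filter.principal_neBot_iff.2 (hne A.1 A.2)
  set 𝔛 := Ultrafilter.of (⨅ A : {A // A ∈ 𝔵}, (𝓟 (𝒴 A.1) : Filter (Ultrafilter T))) with h𝔛
  have hmemY : ∀ A, A ∈ 𝔵 → 𝒴 A ∈ 𝔛 := fun A hA =>
    Ultrafilter.of_le _ (mem_iInf_of_mem ⟨A, hA⟩ (mem_principal_self _))
  have hm : mU 𝔛 = 𝔵 := by
    have hsub : (mU 𝔛 : Filter T) ≤ 𝔵 := fun s hs =>
      mem_mU.2 (mem_of_superset (hmemY s hs) fun 𝔶 h𝔶 => h𝔶.1)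
    exact Ultrafilter.coe_injective (𝔵.unique hsub)
  have htr := htrans 𝔛 (pure x) x
  rw [hm, hrefl x, add_zero] at htr
  have hu : uExt c 𝔛 (pure x) ≤ u' := by
    refine uExt_le fun 𝒜 h𝒜 B hB => ?_
    rcases Ultrafilter.nonempty_of_mem (inter_mem h𝒜 (hmemY Set.univ univ_mem)) with ⟨𝔟, hb1, hb2⟩
    have hxB : x ∈ B := hB
    exact le_trans (iInf₂_le 𝔟 hb1) (le_trans (iInf₂_le x hxB) hb2.2)
  exact absurd ((htr.trans hu).trans_lt h2) (lt_irrefl _)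

end DistOf

section AppCat
open Filter Set Ultrafilter

lemma umap_pure {α β : Type*} (f : α → β) (x : α) :
    Ultrafilter.map f (pure x) = pure (f x) := by
  ext s; simp [Ultrafilter.mem_map]

lemma umap_const {α β : Type*} (𝔵 : Ultrafilter α) (y : β) :
    Ultrafilter.map (fun _ => y) 𝔵 = pure y := by
  refine Ultrafilter.coe_injective ?_
  rw [show ((pure y : Ultrafilter β) : Filter β) = pure y from rfl]
  exact Filter.map_const

/-- Build an approach space from a reflexive and transitive convergence. -/
def mkApp (T : Type) (c : Ultrafilter T → T → ℝ≥0∞) (h1 : IsReflexiveConv c)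
    (h2 : IsTransitiveConv c) : AppSpace :=
  ⟨T, distOf c, isApproachDistance_distOf h1 h2⟩

lemma mkApp_conv (T : Type) (c : Ultrafilter T → T → ℝ≥0∞) (h1 : IsReflexiveConv c)
    (h2 : IsTransitiveConv c) : appConv (mkApp T c h1 h2).dist = c :=
  appConv_distOf h1 h2

lemma AppSpace.conv_refl (Z : AppSpace) : IsReflexiveConv (appConv Z.dist) :=
  appConv_reflexive Z.isApproachDistance

lemma AppSpace.conv_trans (Z : AppSpace) : IsTransitiveConv (appConv Z.dist) :=
  appConv_transitive Z.isApproachDistance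

lemma AppHom.ext {A B : AppSpace} {f g : A ⟶ B} (h : f.1 = g.1) : f = g := Subtype.ext h

/-- The space `[0,∞]` with the `λ` structure. -/
def Pinf : AppSpace := ⟨ℝ≥0∞, distLam, isApproachDistance_distLam⟩

lemma Pinf_conv : appConv Pinf.dist = ennConv := appConv_distLam

/-- The one-point approach space. -/
def unitSpace : AppSpace :=
  mkApp PUnit (fun _ _ => 0) (fun _ => rfl) (fun _ _ _ => zero_le)

/-- Constant maps are contractions. -/
def constHom (W Z : AppSpace) (z : Z.carrier) : W ⟶ Z :=
  ⟨fun _ => z, by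
    intro 𝔴 w
    rw [umap_const, Z.conv_refl z]
    exact zero_le⟩

variable (X0 : AppSpace)

/-- The product convergence of `Z × X0`. -/
def prodConv (Z : AppSpace) :
    Ultrafilter (Z.carrier × X0.carrier) → Z.carrier × X0.carrier → ℝ≥0∞ :=
  fun 𝔴 p => max (appConv Z.dist (Ultrafilter.map Prod.fst 𝔴) p.1)
    (appConv X0.dist (Ultrafilter.map Prod.snd 𝔴) p.2)

lemma prodConv_refl (Z : AppSpace) : IsReflexiveConv (prodConv X0 Z) := by
  intro p
  show max (appConv Z.dist (Ultrafilter.map Prod.fst (pure p)) p.1) _ = 0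
  rw [umap_pure, umap_pure, Z.conv_refl, X0.conv_refl, max_self]

lemma prodConv_trans (Z : AppSpace) : IsTransitiveConv (prodConv X0 Z) := by
  intro 𝔚 𝔴 p
  have h1 : appConv Z.dist (Ultrafilter.map Prod.fst (mU 𝔚)) p.1 ≤
      uExt (appConv Z.dist) (Ultrafilter.map (Ultrafilter.map Prod.fst) 𝔚)
        (Ultrafilter.map Prod.fst 𝔴) + appConv Z.dist (Ultrafilter.map Prod.fst 𝔴) p.1 := by
    rw [← mU_map]; exact Z.conv_trans _ _ _
  have h2 : appConv X0.dist (Ultrafilter.map Prod.snd (mU 𝔚)) p.2 ≤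
      uExt (appConv X0.dist) (Ultrafilter.map (Ultrafilter.map Prod.snd) 𝔚)
        (Ultrafilter.map Prod.snd 𝔴) + appConv X0.dist (Ultrafilter.map Prod.snd 𝔴) p.2 := by
    rw [← mU_map]; exact X0.conv_trans _ _ _
  have hu1 : uExt (appConv Z.dist) (Ultrafilter.map (Ultrafilter.map Prod.fst) 𝔚)
      (Ultrafilter.map Prod.fst 𝔴) ≤ uExt (prodConv X0 Z) 𝔚 𝔴 :=
    uExt_map_map_le _ _ _ _ (fun 𝔞 w => le_max_left _ _) 𝔚 𝔴
  have hu2 : uExt (appConv X0.dist) (Ultrafilter.map (Ultrafilter.map Prod.snd) 𝔚)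
      (Ultrafilter.map Prod.snd 𝔴) ≤ uExt (prodConv X0 Z) 𝔚 𝔴 :=
    uExt_map_map_le _ _ _ _ (fun 𝔞 w => le_max_right _ _) 𝔚 𝔴
  refine max_le ?_ ?_
  · exact h1.trans (add_le_add hu1 (le_max_left _ _))
  · exact h2.trans (add_le_add hu2 (le_max_right _ _))

/-- The product of `Z` and `X0` in `App`. -/
def prodSpace (Z : AppSpace) : AppSpace :=
  mkApp (Z.carrier × X0.carrier) (prodConv X0 Z) (prodConv_refl X0 Z) (prodConv_trans X0 Z)

lemma prodSpace_conv (Z : AppSpace) : appConv (prodSpace X0 Z).dist = prodConv X0 Z :=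
  mkApp_conv _ _ _ _

lemma prodSpace_conv_apply (Z : AppSpace) (𝔴 : Ultrafilter (Z.carrier × X0.carrier))
    (p : Z.carrier × X0.carrier) :
    appConv (prodSpace X0 Z).dist 𝔴 p = prodConv X0 Z 𝔴 p :=
  congrFun (congrFun (prodSpace_conv X0 Z) 𝔴) p

def prodFst (Z : AppSpace) : prodSpace X0 Z ⟶ Z :=
  ⟨Prod.fst, by
    intro 𝔴 w
    rw [prodSpace_conv]
    exact le_max_left _ _⟩

def prodSnd (Z : AppSpace) : prodSpace X0 Z ⟶ X0 :=
  ⟨Prod.snd, by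
    intro 𝔴 w
    rw [prodSpace_conv]
    exact le_max_right _ _⟩

def prodPair {W Z : AppSpace} (f : W ⟶ Z) (g : W ⟶ X0) : W ⟶ prodSpace X0 Z :=
  ⟨fun w => (f.1 w, g.1 w), by
    intro 𝔴 w
    rw [prodSpace_conv]
    refine max_le ?_ ?_
    · erw [Ultrafilter.map_map]
      exact f.2 𝔴 w
    · erw [Ultrafilter.map_map]
      exact g.2 𝔴 w⟩

lemma isProductCone_prodSpace (Z : AppSpace) :
    IsProductCone (prodFst X0 Z) (prodSnd X0 Z) := by
  intro W f g
  refine ⟨prodPair X0 f g, ⟨AppHom.ext rfl, AppHom.ext rfl⟩, ?_⟩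
  rintro h ⟨h1, h2⟩
  refine AppHom.ext (funext fun w => ?_)
  have e1 : (prodFst X0 Z).1 (h.1 w) = f.1 w := congrFun (congrArg Subtype.val h1) w
  have e2 : (prodSnd X0 Z).1 (h.1 w) = g.1 w := congrFun (congrArg Subtype.val h2) w
  exact Prod.ext e1 e2

/-- The product functor `(-) × X0`. -/
def Fprod : AppSpace ⥤ AppSpace where
  obj Z := prodSpace X0 Z
  map {Z W} h :=
    ⟨fun p => (h.1 p.1, p.2), by
      intro 𝔴 w
      rw [prodSpace_conv, prodSpace_conv]
      simp only [prodConv, Ultrafilter.map_map]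
      have hf := h.2 (Ultrafilter.map Prod.fst 𝔴) w.1
      erw [Ultrafilter.map_map] at hf
      exact max_le (hf.trans (le_max_left _ _)) (le_max_right _ _)⟩
  map_id Z := AppHom.ext rfl
  map_comp f g := AppHom.ext rfl

lemma Fprod_nat {Z W : AppSpace} (h : Z ⟶ W) :
    (Fprod X0).map h ≫ prodFst X0 W = prodFst X0 Z ≫ h ∧
    (Fprod X0).map h ≫ prodSnd X0 W = prodSnd X0 Z := ⟨AppHom.ext rfl, AppHom.ext rfl⟩

end AppCat

section DGen
open Filter Set Ultrafilter

lemma le_max_of_forall_gt {b v u₀ : ℝ≥0∞} (h : ∀ u', u₀ < u' → b ≤ max u' v) : b ≤ max u₀ v := by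
  by_contra hc
  have h1 : max u₀ v < b := lt_of_not_ge hc
  rcases exists_between h1 with ⟨u', h2, h3⟩
  have h4 : u₀ < u' := lt_of_le_of_lt (le_max_left _ _) h2
  have h6 : max u' v < b := max_lt h3 ((le_max_right u₀ v).trans_lt h1)
  exact absurd ((h u' h4).trans_lt h6) (lt_irrefl _)

lemma isTransitiveConv_of_equiv {α β : Type*} (e : α ≃ β) (r : Ultrafilter α → α → ℝ≥0∞)
    (r' : Ultrafilter β → β → ℝ≥0∞) (h : ∀ 𝔭 φ, r 𝔭 φ = r' (Ultrafilter.map e 𝔭) (e φ))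
    (ht : IsTransitiveConv r') : IsTransitiveConv r := by
  intro 𝔛 𝔵 x
  rw [h, ← mU_map]
  refine le_trans (ht (Ultrafilter.map (Ultrafilter.map e) 𝔛) (Ultrafilter.map e 𝔵) (e x)) ?_
  refine add_le_add ?_ (le_of_eq (h 𝔵 x).symm)
  exact uExt_map_map_le (Ultrafilter.map e) e r r' (fun 𝔞 ψ => le_of_eq (h 𝔞 ψ).symm) 𝔛 𝔵

variable (X0 : AppSpace)

/-- Contractions from `X0` to `Z`. -/
abbrev ContrTo (Z : AppSpace) : Type :=
  {φ : X0.carrier → Z.carrier // IsContraction (appConv X0.dist) (appConv Z.dist) φ}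

def evGen (Z : AppSpace) : ContrTo X0 Z × X0.carrier → Z.carrier := fun p => p.1.1 p.2

def dGenSet (Z : AppSpace) (𝔭 : Ultrafilter (ContrTo X0 Z)) (φ : ContrTo X0 Z) : Set ℝ≥0∞ :=
  {u : ℝ≥0∞ | ∀ 𝔮 : Ultrafilter (ContrTo X0 Z × X0.carrier),
    Ultrafilter.map Prod.fst 𝔮 = 𝔭 → ∀ x : X0.carrier,
      appConv Z.dist (Ultrafilter.map (evGen X0 Z) 𝔮) (φ.1 x)
        ≤ max u (appConv X0.dist (Ultrafilter.map Prod.snd 𝔮) x)}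

/-- The exponential convergence on `ContrTo Z`. -/
def dGen (Z : AppSpace) : Ultrafilter (ContrTo X0 Z) → ContrTo X0 Z → ℝ≥0∞ :=
  fun 𝔭 φ => sInf (dGenSet X0 Z 𝔭 φ)

lemma dGen_spec {Z : AppSpace} {𝔭 : Ultrafilter (ContrTo X0 Z)} {φ : ContrTo X0 Z} {u : ℝ≥0∞}
    (h : dGen X0 Z 𝔭 φ < u) : u ∈ dGenSet X0 Z 𝔭 φ := by
  rcases sInf_lt_iff.1 h with ⟨u₀, hu₀, hlt⟩
  intro 𝔮 h𝔮 x
  exact le_trans (hu₀ 𝔮 h𝔮 x) (max_le_max hlt.le le_rfl)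

lemma dGen_refl (Z : AppSpace) : IsReflexiveConv (dGen X0 Z) := by
  intro φ
  refine le_antisymm (sInf_le ?_) (zero_le)
  intro 𝔮 h𝔮 x
  have hmem : Prod.fst ⁻¹' {φ} ∈ 𝔮 := by
    rw [← Ultrafilter.mem_map, h𝔮]
    exact rfl
  have hev : Ultrafilter.map (evGen X0 Z) 𝔮
      = Ultrafilter.map (φ.1 ∘ Prod.snd) 𝔮 := by
    refine umap_congr hmem fun p hp => ?_
    have : p.1 = φ := hp
    show p.1.1 p.2 = φ.1 p.2
    rw [this]
  rw [hev, ← Ultrafilter.map_map]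
  exact le_trans (φ.2 _ _) (le_max_right _ _)

/-- Post-composition with a contraction. -/
def compC {Z W : AppSpace} (g : Z ⟶ W) (ψ : ContrTo X0 Z) : ContrTo X0 W :=
  ⟨g.1 ∘ ψ.1, by
    intro 𝔵 x
    rw [← Ultrafilter.map_map]
    exact le_trans (g.2 _ _) (ψ.2 𝔵 x)⟩

lemma dGen_push {Z W : AppSpace} (g : Z ⟶ W) (𝔭 : Ultrafilter (ContrTo X0 Z))
    (φ : ContrTo X0 Z) :
    dGen X0 W (Ultrafilter.map (compC X0 g) 𝔭) (compC X0 g φ) ≤ dGen X0 Z 𝔭 φ := by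
  refine sInf_le_sInf ?_
  intro u hu 𝔮' h𝔮' x
  rcases exists_uf_lift (compC X0 g) 𝔭 𝔮' h𝔮' with ⟨𝔮, h1, h2⟩
  have hev : Ultrafilter.map (evGen X0 W) 𝔮'
      = Ultrafilter.map g.1 (Ultrafilter.map (evGen X0 Z) 𝔮) := by
    rw [← h2, Ultrafilter.map_map, Ultrafilter.map_map]
    rfl
  have hsnd : Ultrafilter.map Prod.snd 𝔮' = Ultrafilter.map Prod.snd 𝔮 := by
    rw [← h2, Ultrafilter.map_map]
    rfl
  rw [hev, hsnd]
  exact le_trans (g.2 _ _) (hu 𝔮 h1 x)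

/-- `δ(A, -)` as a morphism `Z ⟶ [0,∞]`. -/
def deltaHom (Z : AppSpace) (A : Set Z.carrier) : Z ⟶ Pinf :=
  ⟨fun z => Z.dist A z, by
    intro 𝔷 z
    show appConv distLam _ _ ≤ _
    rw [appConv_distLam]
    exact deltaA_contraction Z.isApproachDistance A 𝔷 z⟩

lemma dGen_le_sup (Z : AppSpace) (𝔭 : Ultrafilter (ContrTo X0 Z)) (φ : ContrTo X0 Z) :
    dGen X0 Z 𝔭 φ ≤ ⨆ A : Set Z.carrier,
      dGen X0 Pinf (Ultrafilter.map (compC X0 (deltaHom Z A)) 𝔭)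
        (compC X0 (deltaHom Z A) φ) := by
  refine le_of_forall_gt_imp_ge_of_dense fun u' hu' => ?_
  refine sInf_le ?_
  intro 𝔮 h𝔮 x
  rw [appConv_eq_sup_delta Z.isApproachDistance]
  refine iSup_le fun A => ?_
  have hA : dGen X0 Pinf (Ultrafilter.map (compC X0 (deltaHom Z A)) 𝔭)
      (compC X0 (deltaHom Z A) φ) < u' := lt_of_le_of_lt (le_iSup (fun A : Set Z.carrier =>
        dGen X0 Pinf (Ultrafilter.map (compC X0 (deltaHom Z A)) 𝔭)
          (compC X0 (deltaHom Z A) φ)) A) hu'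
  have h𝔮' : Ultrafilter.map Prod.fst
      (Ultrafilter.map (Prod.map (compC X0 (deltaHom Z A)) id) 𝔮)
      = Ultrafilter.map (compC X0 (deltaHom Z A)) 𝔭 := by
    rw [Ultrafilter.map_map, ← h𝔮, Ultrafilter.map_map]
    rfl
  have hs := dGen_spec X0 hA (Ultrafilter.map (Prod.map (compC X0 (deltaHom Z A)) id) 𝔮) h𝔮' x
  have hev : Ultrafilter.map (evGen X0 Pinf)
      (Ultrafilter.map (Prod.map (compC X0 (deltaHom Z A)) id) 𝔮)
      = Ultrafilter.map (fun y => Z.dist A y) (Ultrafilter.map (evGen X0 Z) 𝔮) := by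
    rw [Ultrafilter.map_map, Ultrafilter.map_map]
    rfl
  have hsnd : Ultrafilter.map Prod.snd
      (Ultrafilter.map (Prod.map (compC X0 (deltaHom Z A)) id) 𝔮)
      = Ultrafilter.map Prod.snd 𝔮 := by
    rw [Ultrafilter.map_map]
    rfl
  rw [hev, hsnd] at hs
  have hs2 : appConv distLam
      (Ultrafilter.map (fun y => Z.dist A y) (Ultrafilter.map (evGen X0 Z) 𝔮))
      (Z.dist A (φ.1 x)) ≤ max u' (appConv X0.dist (Ultrafilter.map Prod.snd 𝔮) x) := hs
  rw [appConv_distLam] at hs2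
  exact hs2

lemma dGen_trans_of (hPinf : IsTransitiveConv (dGen X0 Pinf)) (Z : AppSpace) :
    IsTransitiveConv (dGen X0 Z) := by
  intro 𝔛 𝔭 φ
  refine le_trans (dGen_le_sup X0 Z (mU 𝔛) φ) (iSup_le fun A => ?_)
  rw [← mU_map]
  refine le_trans (hPinf (Ultrafilter.map (Ultrafilter.map (compC X0 (deltaHom Z A))) 𝔛)
    (Ultrafilter.map (compC X0 (deltaHom Z A)) 𝔭) (compC X0 (deltaHom Z A) φ)) ?_
  refine add_le_add ?_ (dGen_push X0 _ 𝔭 φ)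
  exact uExt_map_map_le _ _ _ _ (fun 𝔞 ψ => dGen_push X0 _ 𝔞 ψ) 𝔛 𝔭

end DGen

section Adj
open Filter Set Ultrafilter
variable (X0 : AppSpace) (hPinf : IsTransitiveConv (dGen X0 Pinf))

def expSpace (Z : AppSpace) : AppSpace :=
  mkApp (ContrTo X0 Z) (dGen X0 Z) (dGen_refl X0 Z) (dGen_trans_of X0 hPinf Z)

lemma expSpace_conv (Z : AppSpace) : appConv (expSpace X0 hPinf Z).dist = dGen X0 Z :=
  mkApp_conv _ _ _ _

lemma expSpace_conv_apply (Z : AppSpace) (𝔭 : Ultrafilter (ContrTo X0 Z)) (φ : ContrTo X0 Z) :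
    appConv (expSpace X0 hPinf Z).dist 𝔭 φ = dGen X0 Z 𝔭 φ :=
  congrFun (congrFun (expSpace_conv X0 hPinf Z) 𝔭) φ

def expFunctor : AppSpace ⥤ AppSpace where
  obj Z := expSpace X0 hPinf Z
  map {Z W} g :=
    ⟨compC X0 g, by
      intro 𝔭 φ
      rw [expSpace_conv, expSpace_conv]
      exact dGen_push X0 g 𝔭 φ⟩
  map_id Z := AppHom.ext (funext fun ψ => Subtype.ext rfl)
  map_comp f g := AppHom.ext (funext fun ψ => Subtype.ext rfl)

def curryF {Z' Z : AppSpace} (f : prodSpace X0 Z' ⟶ Z) (z' : Z'.carrier) : ContrTo X0 Z :=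
  ⟨fun x => f.1 (z', x), by
    intro 𝔵 x
    have hfst : Ultrafilter.map Prod.fst
        (Ultrafilter.map (fun x : X0.carrier => ((z' : Z'.carrier), x)) 𝔵)
        = pure z' := by
      rw [Ultrafilter.map_map]; exact umap_const 𝔵 z'
    have hsnd : Ultrafilter.map Prod.snd
        (Ultrafilter.map (fun x : X0.carrier => ((z' : Z'.carrier), x)) 𝔵) = 𝔵 := by
      rw [Ultrafilter.map_map]
      exact Ultrafilter.coe_injective Filter.map_id
    calc appConv Z.dist (Ultrafilter.map (fun x => f.1 (z', x)) 𝔵) (f.1 (z', x))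
        = appConv Z.dist (Ultrafilter.map f.1
            (Ultrafilter.map (fun x : X0.carrier => ((z' : Z'.carrier), x)) 𝔵)) (f.1 (z', x)) := by
          erw [Ultrafilter.map_map]
      _ ≤ appConv (prodSpace X0 Z').dist
            (Ultrafilter.map (fun x : X0.carrier => ((z' : Z'.carrier), x)) 𝔵) (z', x) :=
          f.2 _ _
      _ ≤ appConv X0.dist 𝔵 x := by
          erw [prodSpace_conv_apply]
          simp only [prodConv]
          erw [hfst, hsnd, Z'.conv_refl z', max_eq_right (zero_le)]⟩

def curryHom {Z' Z : AppSpace} (f : prodSpace X0 Z' ⟶ Z) : Z' ⟶ expSpace X0 hPinf Z :=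
  ⟨curryF X0 f, by
    intro 𝔷 z'
    rw [expSpace_conv]
    refine sInf_le ?_
    intro 𝔮 h𝔮 x
    rcases exists_uf_lift (curryF X0 f) 𝔷 𝔮 h𝔮 with ⟨𝔯, h1, h2⟩
    have hev : Ultrafilter.map (evGen X0 Z) 𝔮 = Ultrafilter.map f.1 𝔯 := by
      rw [← h2, Ultrafilter.map_map]; rfl
    have hsnd : Ultrafilter.map Prod.snd 𝔮 = Ultrafilter.map Prod.snd 𝔯 := by
      rw [← h2, Ultrafilter.map_map]; rfl
    calc appConv Z.dist (Ultrafilter.map (evGen X0 Z) 𝔮) ((curryF X0 f z').1 x)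
        = appConv Z.dist (Ultrafilter.map f.1 𝔯) (f.1 (z', x)) := by rw [hev]; exact rfl
      _ ≤ appConv (prodSpace X0 Z').dist 𝔯 (z', x) := f.2 _ _
      _ ≤ max (appConv Z'.dist 𝔷 z') (appConv X0.dist (Ultrafilter.map Prod.snd 𝔮) x) := by
          rw [prodSpace_conv_apply, hsnd]
          simp only [prodConv]
          rw [h1]⟩

def uncurryHom {Z' Z : AppSpace} (h : Z' ⟶ expSpace X0 hPinf Z) : prodSpace X0 Z' ⟶ Z :=
  ⟨fun p => (h.1 p.1).1 p.2, by
    intro 𝔴 p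
    erw [prodSpace_conv_apply]
    have hcon : dGen X0 Z (Ultrafilter.map h.1 (Ultrafilter.map Prod.fst 𝔴)) (h.1 p.1)
        ≤ appConv Z'.dist (Ultrafilter.map Prod.fst 𝔴) p.1 := by
      have hx := h.2 (Ultrafilter.map Prod.fst 𝔴) p.1
      erw [expSpace_conv_apply] at hx; exact hx
    simp only [prodConv]
    refine le_trans ?_ (max_le_max hcon le_rfl)
    refine le_max_of_forall_gt fun u' hu' => ?_
    have h𝔮 : Ultrafilter.map Prod.fst (Ultrafilter.map (Prod.map h.1 id) 𝔴)
        = Ultrafilter.map h.1 (Ultrafilter.map Prod.fst 𝔴) := by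
      erw [Ultrafilter.map_map, Ultrafilter.map_map] <;> rfl
    have hs2 := dGen_spec X0 hu' (Ultrafilter.map (Prod.map h.1 id) 𝔴) h𝔮 p.2
    have hev : Ultrafilter.map (evGen X0 Z) (Ultrafilter.map (Prod.map h.1 id) 𝔴)
        = Ultrafilter.map (fun q : Z'.carrier × X0.carrier => (h.1 q.1).1 q.2) 𝔴 := by
      erw [Ultrafilter.map_map] <;> rfl
    have hsnd : Ultrafilter.map Prod.snd (Ultrafilter.map (Prod.map h.1 id) 𝔴)
        = Ultrafilter.map Prod.snd 𝔴 := by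
      erw [Ultrafilter.map_map] <;> rfl
    rw [hev] at hs2
    exact le_trans hs2 (le_of_eq (congrArg (fun t => max u' (appConv X0.dist t p.2)) hsnd))⟩

def expAdj : Fprod X0 ⊣ expFunctor X0 hPinf :=
  Adjunction.mkOfHomEquiv
    { homEquiv := fun Z' Z =>
        { toFun := fun f => curryHom X0 hPinf f
          invFun := fun h => uncurryHom X0 hPinf h
          left_inv := fun f => AppHom.ext (funext fun p => rfl)
          right_inv := fun h => AppHom.ext (funext fun z' => Subtype.ext rfl) }
      homEquiv_naturality_left_symm := fun f g => AppHom.ext rfl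
      homEquiv_naturality_right := fun f g => AppHom.ext (funext fun z' => Subtype.ext rfl) }

end Adj

lemma appExponentiable_of (X0 : AppSpace) (hp : IsTransitiveConv (dGen X0 Pinf)) :
    AppExponentiable X0 :=
  ⟨Fprod X0, expFunctor X0 hp, expAdj X0 hp, prodFst X0, prodSnd X0,
    isProductCone_prodSpace X0, fun Z W h => Fprod_nat X0 h⟩

section Gadget
open Filter Set Ultrafilter
variable (X0 : AppSpace)

lemma hom_congr {A B : AppSpace} {f g : A ⟶ B} (h : f = g) (x : A.carrier) : f.1 x = g.1 x :=
  congrFun (congrArg Subtype.val h) x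

/-- A test convergence making `𝔭` converge to `φ` with value `u`. -/
def gConv (𝔭 : Ultrafilter (ContrTo X0 Pinf)) (φ : ContrTo X0 Pinf) (u : ℝ≥0∞) :
    Ultrafilter (ContrTo X0 Pinf) → ContrTo X0 Pinf → ℝ≥0∞ := fun 𝔯 ψ =>
  haveI := Classical.propDecidable (𝔯 = pure ψ)
  haveI := Classical.propDecidable (𝔯 = 𝔭 ∧ ψ = φ)
  min (if 𝔯 = pure ψ then 0 else ⊤) (if 𝔯 = 𝔭 ∧ ψ = φ then u else ⊤)

lemma gConv_refl (𝔭 : Ultrafilter (ContrTo X0 Pinf)) (φ : ContrTo X0 Pinf) (u : ℝ≥0∞) :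
    IsReflexiveConv (gConv X0 𝔭 φ u) := by
  intro ψ
  refine le_antisymm (le_trans (min_le_left _ _) (le_of_eq (if_pos rfl))) (zero_le)

lemma gConv_self (𝔭 : Ultrafilter (ContrTo X0 Pinf)) (φ : ContrTo X0 Pinf) (u : ℝ≥0∞) :
    gConv X0 𝔭 φ u 𝔭 φ ≤ u :=
  le_trans (min_le_right _ _) (le_of_eq (if_pos ⟨rfl, rfl⟩))

lemma gConv_top {𝔭 : Ultrafilter (ContrTo X0 Pinf)} {φ : ContrTo X0 Pinf} {u : ℝ≥0∞}
    {𝔯 : Ultrafilter (ContrTo X0 Pinf)} {ψ : ContrTo X0 Pinf}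
    (h1 : ¬ 𝔯 = pure ψ) (h2 : ¬ (𝔯 = 𝔭 ∧ ψ = φ)) : gConv X0 𝔭 φ u 𝔯 ψ = ⊤ := by
  show min _ _ = ⊤
  rw [if_neg h1, if_neg h2, min_self]

lemma gConv_lt_top {𝔭 : Ultrafilter (ContrTo X0 Pinf)} {φ : ContrTo X0 Pinf} {u : ℝ≥0∞}
    {𝔯 : Ultrafilter (ContrTo X0 Pinf)} {ψ : ContrTo X0 Pinf}
    (h : gConv X0 𝔭 φ u 𝔯 ψ < ⊤) : 𝔯 = pure ψ ∨ 𝔯 = 𝔭 := by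
  by_cases h1 : 𝔯 = pure ψ
  · exact Or.inl h1
  by_cases h2 : 𝔯 = 𝔭 ∧ ψ = φ
  · exact Or.inr h2.1
  · rw [gConv_top X0 h1 h2] at h
    exact absurd h (lt_irrefl _)

lemma gConv_trans (𝔭 : Ultrafilter (ContrTo X0 Pinf)) (φ : ContrTo X0 Pinf) (u : ℝ≥0∞) :
    IsTransitiveConv (gConv X0 𝔭 φ u) := by
  intro 𝔛 𝔶 ψ
  rcases eq_or_ne (uExt (gConv X0 𝔭 φ u) 𝔛 𝔶) ⊤ with hU | hU
  · rw [hU, top_add]; exact le_top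
  have key : 𝔛 = pure 𝔭 ∨ mU 𝔛 = 𝔶 := by
    by_cases hP : ({𝔭} : Set (Ultrafilter (ContrTo X0 Pinf))) ∈ 𝔛
    · exact Or.inl (eq_pure_of_singleton_mem hP)
    right
    have hPc : ({𝔭} : Set (Ultrafilter (ContrTo X0 Pinf)))ᶜ ∈ 𝔛 :=
      Ultrafilter.compl_mem_iff_notMem.2 hP
    have hPB : ∀ B ∈ 𝔶, (pure '' B ∪ {𝔭} : Set (Ultrafilter (ContrTo X0 Pinf))) ∈ 𝔛 := by
      intro B hB
      refine umem_of_forall_inter fun 𝒜 h𝒜 => ?_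
      have hlt : (⨅ 𝔯 ∈ 𝒜, ⨅ χ ∈ B, gConv X0 𝔭 φ u 𝔯 χ) < ⊤ :=
        lt_of_le_of_lt (iInf_le_uExt _ h𝒜 hB) hU.lt_top
      rcases iInf_lt_iff.1 hlt with ⟨𝔯, h𝔯⟩
      rcases iInf_lt_iff.1 h𝔯 with ⟨h𝔯𝒜, h𝔯2⟩
      rcases iInf_lt_iff.1 h𝔯2 with ⟨χ, hχ⟩
      rcases iInf_lt_iff.1 hχ with ⟨hχB, hg⟩
      refine ⟨𝔯, h𝔯𝒜, ?_⟩
      rcases gConv_lt_top X0 hg with h | h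
      · exact Or.inl ⟨χ, hχB, h.symm⟩
      · exact Or.inr h
    have hsub : ∀ B ∈ 𝔶, B ∈ mU 𝔛 := by
      intro B hB
      refine mem_mU.2 (mem_of_superset (inter_mem (hPB B hB) hPc) ?_)
      rintro 𝔯 ⟨h1, h2⟩
      rcases h1 with ⟨χ, hχ, rfl⟩ | h1
      · exact hχ
      · exact absurd h1 h2
    exact Ultrafilter.coe_injective (𝔶.unique fun B hB => hsub B hB)
  rcases key with hk | hk
  · subst hk
    rw [mU_pure]
    by_cases hb1 : 𝔶 = pure ψ
    · subst hb1
      refine le_trans ?_ le_self_add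
      refine le_trans ?_ (iInf_le_uExt (gConv X0 𝔭 φ u)
        (show ({𝔭} : Set (Ultrafilter (ContrTo X0 Pinf))) ∈ (pure 𝔭 : Ultrafilter _) from rfl)
        (show ({ψ} : Set (ContrTo X0 Pinf)) ∈ (pure ψ : Ultrafilter _) from rfl))
      refine le_iInf₂ fun 𝔯 h𝔯 => le_iInf₂ fun χ hχ => ?_
      have e1 : 𝔯 = 𝔭 := h𝔯
      have e2 : χ = ψ := hχ
      rw [e1, e2]
    by_cases hb2 : 𝔶 = 𝔭 ∧ ψ = φ
    · rcases hb2 with ⟨rfl, rfl⟩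
      exact le_add_self
    · rw [gConv_top X0 hb1 hb2, add_top]; exact le_top
  · rw [hk]
    exact le_add_self

/-- The gadget approach space. -/
def gSpace (𝔭 : Ultrafilter (ContrTo X0 Pinf)) (φ : ContrTo X0 Pinf) (u : ℝ≥0∞) : AppSpace :=
  mkApp (ContrTo X0 Pinf) (gConv X0 𝔭 φ u) (gConv_refl X0 𝔭 φ u) (gConv_trans X0 𝔭 φ u)

lemma gSpace_conv_apply (𝔭 : Ultrafilter (ContrTo X0 Pinf)) (φ : ContrTo X0 Pinf) (u : ℝ≥0∞)
    (𝔯 : Ultrafilter (ContrTo X0 Pinf)) (ψ : ContrTo X0 Pinf) :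
    appConv (gSpace X0 𝔭 φ u).dist 𝔯 ψ = gConv X0 𝔭 φ u 𝔯 ψ :=
  congrFun (congrFun (mkApp_conv _ _ _ _) 𝔯) ψ

/-- Evaluation as a contraction out of the product with the gadget space. -/
def evHom (𝔭 : Ultrafilter (ContrTo X0 Pinf)) (φ : ContrTo X0 Pinf) :
    prodSpace X0 (gSpace X0 𝔭 φ (dGen X0 Pinf 𝔭 φ)) ⟶ Pinf :=
  ⟨evGen X0 Pinf, by
    intro 𝔮 r
    erw [prodSpace_conv_apply]
    show appConv Pinf.dist (Ultrafilter.map (evGen X0 Pinf) 𝔮) (r.1.1 r.2) ≤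
      max (appConv (gSpace X0 𝔭 φ (dGen X0 Pinf 𝔭 φ)).dist (Ultrafilter.map Prod.fst 𝔮) r.1)
        (appConv X0.dist (Ultrafilter.map Prod.snd 𝔮) r.2)
    erw [gSpace_conv_apply]
    by_cases h1 : Ultrafilter.map Prod.fst 𝔮 = pure r.1
    · have hmem : Prod.fst ⁻¹' {r.1} ∈ 𝔮 := by
        erw [← Ultrafilter.mem_map, h1] <;> exact rfl
      have hev : Ultrafilter.map (evGen X0 Pinf) 𝔮
          = Ultrafilter.map (r.1.1 ∘ Prod.snd) 𝔮 := by
        refine umap_congr hmem fun s hs => ?_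
        have : s.1 = r.1 := hs
        show s.1.1 s.2 = r.1.1 s.2
        rw [this]
      erw [hev, ← Ultrafilter.map_map]
      exact le_trans (r.1.2 _ _) (le_max_right _ _)
    by_cases h2 : Ultrafilter.map Prod.fst 𝔮 = 𝔭 ∧ r.1 = φ
    · rcases h2 with ⟨hq, hr⟩
      have hgoal : appConv Pinf.dist (Ultrafilter.map (evGen X0 Pinf) 𝔮) (r.1.1 r.2)
          ≤ max (dGen X0 Pinf 𝔭 φ) (appConv X0.dist (Ultrafilter.map Prod.snd 𝔮) r.2) := by
        refine le_max_of_forall_gt fun u' hu' => ?_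
        have hs := dGen_spec X0 hu' 𝔮 hq r.2
        exact (le_of_eq (congrArg (fun t => appConv Pinf.dist
          (Ultrafilter.map (evGen X0 Pinf) 𝔮) t)
          (congrArg (fun s : ContrTo X0 Pinf => s.1 r.2) hr))).trans hs
      refine le_trans hgoal (max_le_max ?_ le_rfl)
      refine le_min (le_trans le_top (le_of_eq (if_neg h1).symm))
        (le_of_eq (if_pos ⟨hq, hr⟩).symm)
    · refine le_trans le_top (le_trans (le_of_eq (gConv_top X0 h1 h2).symm)
        (le_max_left _ _))⟩

end Gadget

section ExpDir
open Filter Set Ultrafilter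

lemma dGen_trans_of_exp (X0 : AppSpace) (hexp : AppExponentiable X0) :
    IsTransitiveConv (dGen X0 Pinf) := by
  classical
  obtain ⟨F, R, adj, p, q, hcone, hnat⟩ := hexp
  have hH1 : ∀ Z : AppSpace, ∃ h : prodSpace X0 Z ⟶ F.obj Z,
      h ≫ p Z = prodFst X0 Z ∧ h ≫ q Z = prodSnd X0 Z := fun Z =>
    ⟨(hcone Z (prodSpace X0 Z) (prodFst X0 Z) (prodSnd X0 Z)).choose,
      (hcone Z (prodSpace X0 Z) (prodFst X0 Z) (prodSnd X0 Z)).choose_spec.1⟩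
  choose h1 h1p h1q using hH1
  set h2 : ∀ Z : AppSpace, (F.obj Z ⟶ prodSpace X0 Z) := fun Z => prodPair X0 (p Z) (q Z)
    with hh2
  have h2fst : ∀ Z : AppSpace, h2 Z ≫ prodFst X0 Z = p Z := fun Z => AppHom.ext rfl
  have h2snd : ∀ Z : AppSpace, h2 Z ≫ prodSnd X0 Z = q Z := fun Z => AppHom.ext rfl
  have h21 : ∀ Z : AppSpace, h2 Z ≫ h1 Z = 𝟙 (F.obj Z) := by
    intro Z
    obtain ⟨w, _, hwu⟩ := hcone Z (F.obj Z) (p Z) (q Z)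
    have ea : (h2 Z ≫ h1 Z) ≫ p Z = p Z := by
      rw [Category.assoc, h1p Z, h2fst Z]
    have eb : (h2 Z ≫ h1 Z) ≫ q Z = q Z := by
      rw [Category.assoc, h1q Z, h2snd Z]
    rw [hwu _ ⟨ea, eb⟩, hwu _ ⟨Category.id_comp _, Category.id_comp _⟩]
  have h12 : ∀ Z : AppSpace, h1 Z ≫ h2 Z = 𝟙 (prodSpace X0 Z) := by
    intro Z
    obtain ⟨w, _, hwu⟩ := isProductCone_prodSpace X0 Z (prodSpace X0 Z)
      (prodFst X0 Z) (prodSnd X0 Z)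
    have ea : (h1 Z ≫ h2 Z) ≫ prodFst X0 Z = prodFst X0 Z := by
      rw [Category.assoc, h2fst Z, h1p Z]
    have eb : (h1 Z ≫ h2 Z) ≫ prodSnd X0 Z = prodSnd X0 Z := by
      rw [Category.assoc, h2snd Z, h1q Z]
    rw [hwu _ ⟨ea, eb⟩, hwu _ ⟨Category.id_comp _, Category.id_comp _⟩]
  have h21f : ∀ (Z : AppSpace) (w : (F.obj Z).carrier), (h1 Z).1 ((h2 Z).1 w) = w :=
    fun Z w => hom_congr (h21 Z) w
  have h12f : ∀ (Z : AppSpace) (r : (prodSpace X0 Z).carrier),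
      (h2 Z).1 ((h1 Z).1 r) = r := fun Z r => hom_congr (h12 Z) r
  have h1pf : ∀ (Z : AppSpace) (r : (prodSpace X0 Z).carrier),
      (p Z).1 ((h1 Z).1 r) = r.1 := fun Z r => hom_congr (h1p Z) r
  have h1qf : ∀ (Z : AppSpace) (r : (prodSpace X0 Z).carrier),
      (q Z).1 ((h1 Z).1 r) = r.2 := fun Z r => hom_congr (h1q Z) r
  have pin : ∀ (Z : AppSpace) (w w' : (F.obj Z).carrier),
      (p Z).1 w = (p Z).1 w' → (q Z).1 w = (q Z).1 w' → w = w' := by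
    intro Z w w' hp hq'
    have hpair : (h2 Z).1 w = (h2 Z).1 w' := by
      show ((p Z).1 w, (q Z).1 w) = ((p Z).1 w', (q Z).1 w')
      rw [hp, hq']
    calc w = (h1 Z).1 ((h2 Z).1 w) := (h21f Z w).symm
      _ = (h1 Z).1 ((h2 Z).1 w') := by rw [hpair]
      _ = w' := h21f Z w'
  have Fmapf : ∀ (Z W : AppSpace) (k : Z ⟶ W) (w : (F.obj Z).carrier),
      (F.map k).1 w = (h1 W).1 (k.1 ((p Z).1 w), (q Z).1 w) := by
    intro Z W k w
    refine pin W _ _ ?_ ?_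
    · exact (hom_congr (hnat Z W k).1 w).trans
        (h1pf W (k.1 ((p Z).1 w), (q Z).1 w)).symm
    · exact (hom_congr (hnat Z W k).2 w).trans
        (h1qf W (k.1 ((p Z).1 w), (q Z).1 w)).symm
  set E := R.obj Pinf with hE
  set εP : F.obj E ⟶ Pinf := adj.counit.app Pinf with hεP
  have ΦC : ∀ e : E.carrier, IsContraction (appConv X0.dist) (appConv Pinf.dist)
      (fun x => εP.1 ((h1 E).1 (e, x))) := fun e =>
    (prodPair X0 (constHom X0 E e) (𝟙 X0) ≫ h1 E ≫ εP).2
  set Φ : E.carrier → ContrTo X0 Pinf :=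
    fun e => ⟨fun x => εP.1 ((h1 E).1 (e, x)), ΦC e⟩ with hΦ
  have hcounit : ∀ (Z : AppSpace) (k : Z ⟶ E) (w : (F.obj Z).carrier),
      εP.1 ((F.map k).1 w) = ((adj.homEquiv Z Pinf).symm k).1 w := by
    intro Z k w
    have hc := adj.homEquiv_counit (X := Z) (Y := Pinf) (g := k)
    rw [hc]
    rfl
  have Φinj : Function.Injective Φ := by
    intro e e' hee
    have hpt : ∀ (e : E.carrier) (w : (F.obj unitSpace).carrier),
        ((adj.homEquiv unitSpace Pinf).symm (constHom unitSpace E e)).1 w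
          = (Φ e).1 ((q unitSpace).1 w) := by
      intro e w
      rw [← hcounit]
      rw [Fmapf unitSpace E (constHom unitSpace E e) w]
      rfl
    have heq : (adj.homEquiv unitSpace Pinf).symm (constHom unitSpace E e)
        = (adj.homEquiv unitSpace Pinf).symm (constHom unitSpace E e') := by
      refine AppHom.ext (funext fun w => ?_)
      rw [hpt, hpt, hee]
    have h2' := (adj.homEquiv unitSpace Pinf).symm.injective heq
    exact congrFun (congrArg Subtype.val h2') PUnit.unit
  have Φsurj : Function.Surjective Φ := by
    intro φ
    set f0 : F.obj unitSpace ⟶ Pinf :=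
      h2 unitSpace ≫ prodSnd X0 unitSpace ≫ (show X0 ⟶ Pinf from φ) with hf0
    set e0 : unitSpace ⟶ E := adj.homEquiv unitSpace Pinf f0 with he0
    refine ⟨e0.1 PUnit.unit, ?_⟩
    refine Subtype.ext (funext fun x => ?_)
    have hx1 : (h1 E).1 (e0.1 PUnit.unit, x)
        = (F.map e0).1 ((h1 unitSpace).1 (PUnit.unit, x)) := by
      erw [Fmapf unitSpace E e0 ((h1 unitSpace).1 (PUnit.unit, x)), h1pf, h1qf]
    show εP.1 ((h1 E).1 (e0.1 PUnit.unit, x)) = φ.1 x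
    rw [hx1, hcounit unitSpace e0]
    rw [show (adj.homEquiv unitSpace Pinf).symm e0 = f0 from Equiv.symm_apply_apply _ _]
    show (show X0 ⟶ Pinf from φ).1
      ((prodSnd X0 unitSpace).1 ((h2 unitSpace).1 ((h1 unitSpace).1 (PUnit.unit, x)))) = φ.1 x
    rw [h12f unitSpace (PUnit.unit, x)]
    rfl
  set ΦE : E.carrier ≃ ContrTo X0 Pinf := Equiv.ofBijective Φ ⟨Φinj, Φsurj⟩ with hΦE
  have hΦEapp : ∀ e, ΦE e = Φ e := fun e => rfl
  have hkey : ∀ (𝔭 : Ultrafilter (ContrTo X0 Pinf)) (φ : ContrTo X0 Pinf),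
      dGen X0 Pinf 𝔭 φ = appConv E.dist (Ultrafilter.map (⇑ΦE.symm) 𝔭) (ΦE.symm φ) := by
    intro 𝔭 φ
    refine le_antisymm ?_ ?_
    · refine sInf_le ?_
      intro 𝔮 h𝔮 x
      set k : ContrTo X0 Pinf × X0.carrier → (F.obj E).carrier :=
        fun r => (h1 E).1 (ΦE.symm r.1, r.2) with hk
      have hε := εP.2 (Ultrafilter.map k 𝔮) (k (φ, x))
      have hev : Ultrafilter.map εP.1 (Ultrafilter.map k 𝔮)
          = Ultrafilter.map (evGen X0 Pinf) 𝔮 := by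
        rw [Ultrafilter.map_map]
        refine umap_congr univ_mem fun r _ => ?_
        show εP.1 ((h1 E).1 (ΦE.symm r.1, r.2)) = r.1.1 r.2
        have happ : Φ (ΦE.symm r.1) = r.1 := ΦE.apply_symm_apply r.1
        calc εP.1 ((h1 E).1 (ΦE.symm r.1, r.2)) = (Φ (ΦE.symm r.1)).1 r.2 := rfl
          _ = r.1.1 r.2 := by rw [happ]
      have hpt : εP.1 (k (φ, x)) = φ.1 x := by
        have happ : Φ (ΦE.symm φ) = φ := ΦE.apply_symm_apply φ
        show (Φ (ΦE.symm φ)).1 x = φ.1 x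
        rw [happ]
      rw [hev, hpt] at hε
      refine le_trans hε ?_
      have hkk : Ultrafilter.map k 𝔮 = Ultrafilter.map (h1 E).1
          (Ultrafilter.map (Prod.map (⇑ΦE.symm) id) 𝔮) := by
        erw [Ultrafilter.map_map]
      rw [hkk]
      refine le_trans ((h1 E).2 (Ultrafilter.map (Prod.map (⇑ΦE.symm) id) 𝔮)
        (ΦE.symm φ, x)) ?_
      erw [prodSpace_conv_apply]
      have e1 : Ultrafilter.map Prod.fst (Ultrafilter.map (Prod.map (⇑ΦE.symm) id) 𝔮)
          = Ultrafilter.map (⇑ΦE.symm) 𝔭 := by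
        rw [Ultrafilter.map_map, ← h𝔮, Ultrafilter.map_map]; rfl
      have e2 : Ultrafilter.map Prod.snd (Ultrafilter.map (Prod.map (⇑ΦE.symm) id) 𝔮)
          = Ultrafilter.map Prod.snd 𝔮 := by
        rw [Ultrafilter.map_map]; rfl
      simp only [prodConv]
      erw [e1, e2]
    · set G := gSpace X0 𝔭 φ (dGen X0 Pinf 𝔭 φ) with hG
      set e'' : F.obj G ⟶ Pinf := h2 G ≫ evHom X0 𝔭 φ with he''
      set k0 : G ⟶ E := adj.homEquiv G Pinf e'' with hk0def
      have hkψ : ∀ ψ : ContrTo X0 Pinf, Φ (k0.1 ψ) = ψ := by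
        intro ψ
        refine Subtype.ext (funext fun x => ?_)
        show εP.1 ((h1 E).1 (k0.1 ψ, x)) = ψ.1 x
        have hx1 : (F.map k0).1 ((h1 G).1 (ψ, x)) = (h1 E).1 (k0.1 ψ, x) := by
          have hx := Fmapf G E k0 ((h1 G).1 (ψ, x))
          erw [h1pf, h1qf] at hx
          exact hx
        rw [← hx1, hcounit G k0]
        rw [show (adj.homEquiv G Pinf).symm k0 = e'' from Equiv.symm_apply_apply _ _]
        show (evHom X0 𝔭 φ).1 ((h2 G).1 ((h1 G).1 (ψ, x))) = ψ.1 x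
        rw [h12f G (ψ, x)]
        rfl
      have hk0 : ∀ ψ : ContrTo X0 Pinf, k0.1 ψ = ΦE.symm ψ := by
        intro ψ
        apply Φinj
        rw [hkψ ψ]
        exact (ΦE.apply_symm_apply ψ).symm
      have hcon := k0.2 𝔭 φ
      have hGconv : appConv G.dist 𝔭 φ ≤ dGen X0 Pinf 𝔭 φ :=
        le_trans (le_of_eq (gSpace_conv_apply X0 𝔭 φ (dGen X0 Pinf 𝔭 φ) 𝔭 φ))
          (gConv_self X0 𝔭 φ (dGen X0 Pinf 𝔭 φ))
      have em2 : Ultrafilter.map (⇑ΦE.symm) 𝔭 = Ultrafilter.map k0.1 𝔭 :=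
        umap_congr univ_mem fun ψ _ => (hk0 ψ).symm
      calc appConv E.dist (Ultrafilter.map (⇑ΦE.symm) 𝔭) (ΦE.symm φ)
          = appConv E.dist (Ultrafilter.map k0.1 𝔭) (k0.1 φ) := by rw [em2, hk0 φ]
        _ ≤ appConv G.dist 𝔭 φ := hcon
        _ ≤ dGen X0 Pinf 𝔭 φ := hGconv
  exact isTransitiveConv_of_equiv ΦE.symm (dGen X0 Pinf) (appConv E.dist) hkey E.conv_trans

end ExpDir

section Final
open Filter Set Ultrafilter

lemma umap_symm_cancel {α β : Type*} (e : α ≃ β) (𝔟 : Ultrafilter β) :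
    Ultrafilter.map (⇑e) (Ultrafilter.map (⇑e.symm) 𝔟) = 𝔟 := by
  rw [Ultrafilter.map_map]
  have h : (⇑e ∘ ⇑e.symm) = id := funext fun b => e.apply_symm_apply b
  rw [h]
  exact Ultrafilter.coe_injective Filter.map_id

lemma Pinf_conv_apply (𝔳 : Ultrafilter ℝ≥0∞) (v : ℝ≥0∞) :
    appConv Pinf.dist 𝔳 v = ennConv 𝔳 v :=
  congrFun (congrFun appConv_distLam 𝔳) v

/-- The identification of `Contractions (appConv δ)` with `ContrTo ⟨X, δ, hδ⟩ Pinf`. -/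
def iotaC (X : Type) (δ : Set X → X → ℝ≥0∞) (hδ : IsApproachDistance δ) :
    Contractions (appConv δ) ≃ ContrTo (⟨X, δ, hδ⟩ : AppSpace) Pinf where
  toFun φ := ⟨φ.1, by
    show IsContraction (appConv δ) (appConv distLam) φ.1
    rw [appConv_distLam]
    exact φ.2⟩
  invFun ψ := ⟨ψ.1, by
    have h2 : IsContraction (appConv δ) (appConv distLam) ψ.1 := ψ.2
    rw [appConv_distLam] at h2
    exact h2⟩
  left_inv φ := Subtype.ext rfl
  right_inv ψ := Subtype.ext rfl

lemma dExp_eq_dGen (X : Type) (δ : Set X → X → ℝ≥0∞) (hδ : IsApproachDistance δ)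
    (𝔭 : Ultrafilter (Contractions (appConv δ))) (φ : Contractions (appConv δ)) :
    dExp (appConv δ) 𝔭 φ = dGen (⟨X, δ, hδ⟩ : AppSpace) Pinf
      (Ultrafilter.map (⇑(iotaC X δ hδ)) 𝔭) (iotaC X δ hδ φ) := by
  set X0 : AppSpace := ⟨X, δ, hδ⟩ with hX0
  set ι := iotaC X δ hδ with hι
  refine congrArg sInf (Set.ext fun u => ?_)
  constructor
  · intro hu 𝔮' h𝔮' x
    set 𝔮 : Ultrafilter (Contractions (appConv δ) × X) :=
      Ultrafilter.map (Prod.map (⇑ι.symm) id) 𝔮' with h𝔮def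
    have hfst : Ultrafilter.map Prod.fst 𝔮 = 𝔭 := by
      rw [h𝔮def, Ultrafilter.map_map]
      have e1 : Ultrafilter.map (Prod.fst ∘ Prod.map (⇑ι.symm) id) 𝔮'
          = Ultrafilter.map (⇑ι.symm) (Ultrafilter.map Prod.fst 𝔮') := by
        rw [Ultrafilter.map_map]; rfl
      rw [e1, h𝔮', Ultrafilter.map_map]
      have h : (⇑ι.symm ∘ ⇑ι) = id := funext fun b => ι.symm_apply_apply b
      rw [h]
      exact Ultrafilter.coe_injective Filter.map_id
    have hs := hu 𝔮 hfst x
    have hev : Ultrafilter.map (evMap (appConv δ)) 𝔮 = Ultrafilter.map (evGen X0 Pinf) 𝔮' := by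
      rw [h𝔮def, Ultrafilter.map_map]
      refine umap_congr univ_mem fun r _ => ?_
      show (ι.symm r.1).1 r.2 = r.1.1 r.2
      rfl
    have hsnd : Ultrafilter.map Prod.snd 𝔮 = Ultrafilter.map Prod.snd 𝔮' := by
      rw [h𝔮def, Ultrafilter.map_map]; rfl
    rw [hev, hsnd] at hs
    erw [Pinf_conv_apply]
    exact tsub_le_iff_right.2 hs
  · intro hu 𝔮 h𝔮 x
    set 𝔮' : Ultrafilter (ContrTo X0 Pinf × X0.carrier) :=
      Ultrafilter.map (Prod.map (⇑ι) id) 𝔮 with h𝔮'def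
    have hfst : Ultrafilter.map Prod.fst 𝔮' = Ultrafilter.map (⇑ι) 𝔭 := by
      rw [h𝔮'def, Ultrafilter.map_map, ← h𝔮, Ultrafilter.map_map]; rfl
    have hs := hu 𝔮' hfst x
    have hev : Ultrafilter.map (evGen X0 Pinf) 𝔮' = Ultrafilter.map (evMap (appConv δ)) 𝔮 := by
      rw [h𝔮'def, Ultrafilter.map_map]
      refine umap_congr univ_mem fun r _ => ?_
      show (ι r.1).1 r.2 = r.1.1 r.2
      rfl
    have hsnd : Ultrafilter.map Prod.snd 𝔮' = Ultrafilter.map Prod.snd 𝔮 := by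
      rw [h𝔮'def, Ultrafilter.map_map]; rfl
    erw [Pinf_conv_apply, hev, hsnd] at hs
    have hs2 : φ.1 x - xi (Ultrafilter.map (evMap (appConv δ)) 𝔮)
        ≤ max u (appConv δ (Ultrafilter.map Prod.snd 𝔮) x) := hs
    rw [tsub_le_iff_right] at hs2
    exact hs2

end Final

/-- An approach space `(X, δ)` with ultrafilter convergence `a` is exponentiable
in `App` if and only if the exponential convergence `d` on `[0,∞]^X` is transitive (so that
`[0,∞]^X` with `d` is itself an approach space). -/
theorem exponentiable_iff_dExp_transitive (X : Type) (δ : Set X → X → ℝ≥0∞)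
    (hδ : IsApproachDistance δ)
    (a : Ultrafilter X → X → ℝ≥0∞) (ha : ∀ (𝔵 : Ultrafilter X) (x : X), a 𝔵 x = ⨆ A ∈ 𝔵, δ A x) :
    AppExponentiable ⟨X, δ, hδ⟩ ↔ IsTransitiveConv (dExp a) := by
  have haeq : a = appConv δ := funext fun 𝔵 => funext fun x => ha 𝔵 x
  subst haeq
  constructor
  · intro hexp
    have ht := dGen_trans_of_exp ⟨X, δ, hδ⟩ hexp
    exact isTransitiveConv_of_equiv (iotaC X δ hδ) (dExp (appConv δ))
      (dGen ⟨X, δ, hδ⟩ Pinf) (fun 𝔭 φ => dExp_eq_dGen X δ hδ 𝔭 φ) ht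
  · intro htr
    refine appExponentiable_of ⟨X, δ, hδ⟩ ?_
    refine isTransitiveConv_of_equiv (iotaC X δ hδ).symm (dGen ⟨X, δ, hδ⟩ Pinf)
      (dExp (appConv δ)) ?_ htr
    intro 𝔭' φ'
    rw [dExp_eq_dGen X δ hδ, umap_symm_cancel (iotaC X δ hδ) 𝔭', Equiv.apply_symm_apply]

end
end

section
/- For every numerical relation r : X ⇸ Y, every 𝔵 ∈ U X and every 𝔶 ∈ U Y, Ū r (𝔵, 𝔶) = inf { ξ (U r' 𝔴) | 𝔴 ∈ U (X × Y), U π₁ 𝔴 = 𝔵, U π₂ 𝔴 = 𝔶 }, where r' : X × Y → ℝ≥0∞ is r viewed as a function and U r' 𝔴 is its pushforward ultrafilter. -/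
open scoped ENNReal
open CategoryTheory

noncomputable section

/-- For every numerical relation `r : X ⇸ Y`, `𝔵 ∈ U X` and `𝔶 ∈ U Y`,
`Ū r (𝔵, 𝔶) = inf {ξ (U r' 𝔴) | 𝔴 ∈ U (X × Y), U π₁ 𝔴 = 𝔵, U π₂ 𝔴 = 𝔶}`. -/
theorem uExt_eq_inf_xi (X Y : Type*) (r : X → Y → ℝ≥0∞)
    (𝔵 : Ultrafilter X) (𝔶 : Ultrafilter Y) :
    uExt r 𝔵 𝔶 = sInf {w : ℝ≥0∞ | ∃ 𝔴 : Ultrafilter (X × Y),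
      Ultrafilter.map Prod.fst 𝔴 = 𝔵 ∧ Ultrafilter.map Prod.snd 𝔴 = 𝔶 ∧
      xi (Ultrafilter.map (fun p => r p.1 p.2) 𝔴) = w} := by
  set d := uExt r 𝔵 𝔶 with hd
  apply le_antisymm
  · apply le_sInf
    rintro w ⟨𝔴, h1, h2, rfl⟩
    rw [hd, uExt]
    apply iSup₂_le; intro A hA
    apply iSup₂_le; intro B hB
    have hAB : A ×ˢ B ∈ 𝔴 := by
      have hA' : Prod.fst ⁻¹' A ∈ 𝔴 := by rw [← h1] at hA; exact hA
      have hB' : Prod.snd ⁻¹' B ∈ 𝔴 := by rw [← h2] at hB; exact hB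
      exact Filter.inter_mem hA' hB'
    have hC : (fun p : X × Y => r p.1 p.2) '' (A ×ˢ B) ∈
        Ultrafilter.map (fun p : X × Y => r p.1 p.2) 𝔴 := Filter.image_mem_map hAB
    calc ⨅ x ∈ A, ⨅ y ∈ B, r x y
        ≤ ⨅ u ∈ (fun p : X × Y => r p.1 p.2) '' (A ×ˢ B), u := by
          apply le_iInf₂; rintro u ⟨p, hp, rfl⟩
          exact iInf₂_le_of_le p.1 hp.1 (iInf₂_le p.2 hp.2)
      _ ≤ xi (Ultrafilter.map (fun p : X × Y => r p.1 p.2) 𝔴) :=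
          le_iSup₂ (f := fun C (_ : C ∈ Ultrafilter.map (fun p : X × Y => r p.1 p.2) 𝔴)
            => ⨅ u ∈ C, u) _ hC
  · set T : ℝ≥0∞ → Set (X × Y) := fun ε => {p | r p.1 p.2 ≤ d + ε} with hT
    set L : Filter (X × Y) := ⨅ ε ∈ Set.Ioi (0 : ℝ≥0∞), Filter.principal (T ε) with hL
    have hLbasis : L.HasBasis (· ∈ Set.Ioi (0 : ℝ≥0∞)) T := by
      apply Filter.hasBasis_biInf_principal
      · rintro ε₁ hε₁ ε₂ hε₂
        refine ⟨min ε₁ ε₂, Set.mem_Ioi.mpr (lt_min (Set.mem_Ioi.mp hε₁) (Set.mem_Ioi.mp hε₂)), ?_, ?_⟩ <;>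
          · intro p hp
            exact le_trans hp (add_le_add_right (by simp [min_le_left, min_le_right]) d)
      · exact ⟨1, by norm_num⟩
    have hbasis : (((𝔵 : Filter X) ×ˢ (𝔶 : Filter Y)) ⊓ L).HasBasis
        (fun i : (Set X × Set Y) × ℝ≥0∞ => (i.1.1 ∈ 𝔵 ∧ i.1.2 ∈ 𝔶) ∧ i.2 ∈ Set.Ioi (0:ℝ≥0∞))
        (fun i => i.1.1 ×ˢ i.1.2 ∩ T i.2) :=
      ((𝔵 : Filter X).basis_sets.prod (𝔶 : Filter Y).basis_sets).inf hLbasis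
    have key : ∀ (A : Set X) (B : Set Y) (ε : ℝ≥0∞), A ∈ 𝔵 → B ∈ 𝔶 → 0 < ε →
        (A ×ˢ B ∩ T ε).Nonempty := by
      intro A B ε hA hB hε
      rcases eq_or_ne d ⊤ with hdt | hdt
      · obtain ⟨x, hx⟩ := 𝔵.nonempty_of_mem hA
        obtain ⟨y, hy⟩ := 𝔶.nonempty_of_mem hB
        exact ⟨(x, y), ⟨hx, hy⟩, by simp [hT, hdt]⟩
      · have h1 : ⨅ x ∈ A, ⨅ y ∈ B, r x y ≤ d := by
          rw [hd, uExt]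
          exact le_iSup₂_of_le A hA (le_iSup₂_of_le B hB le_rfl)
        have h2 : ⨅ x ∈ A, ⨅ y ∈ B, r x y < d + ε :=
          lt_of_le_of_lt h1 (ENNReal.lt_add_right hdt hε.ne')
        simp only [iInf_lt_iff] at h2
        obtain ⟨x, hx, y, hy, hr⟩ := h2
        exact ⟨(x, y), ⟨hx, hy⟩, hr.le⟩
    have hne : (((𝔵 : Filter X) ×ˢ (𝔶 : Filter Y)) ⊓ L).NeBot := by
      rw [hbasis.neBot_iff]
      rintro ⟨⟨A, B⟩, ε⟩ ⟨⟨hA, hB⟩, hε⟩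
      exact key A B ε hA hB hε
    set 𝔴 := @Ultrafilter.of _ (((𝔵 : Filter X) ×ˢ (𝔶 : Filter Y)) ⊓ L) hne with h𝔴
    have hle : (𝔴 : Filter (X × Y)) ≤ ((𝔵 : Filter X) ×ˢ (𝔶 : Filter Y)) ⊓ L :=
      Ultrafilter.of_le _
    have hprod : (𝔴 : Filter (X × Y)) ≤ (𝔵 : Filter X) ×ˢ (𝔶 : Filter Y) :=
      hle.trans inf_le_left
    have hfst : Ultrafilter.map Prod.fst 𝔴 = 𝔵 := by
      apply Ultrafilter.coe_le_coe.mp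
      calc (Ultrafilter.map Prod.fst 𝔴 : Filter X)
          = Filter.map Prod.fst (𝔴 : Filter (X × Y)) := rfl
        _ ≤ Filter.map Prod.fst ((𝔵 : Filter X) ×ˢ (𝔶 : Filter Y)) := Filter.map_mono hprod
        _ = 𝔵 := Filter.map_fst_prod _ _
    have hsnd : Ultrafilter.map Prod.snd 𝔴 = 𝔶 := by
      apply Ultrafilter.coe_le_coe.mp
      calc (Ultrafilter.map Prod.snd 𝔴 : Filter Y)
          = Filter.map Prod.snd (𝔴 : Filter (X × Y)) := rfl
        _ ≤ Filter.map Prod.snd ((𝔵 : Filter X) ×ˢ (𝔶 : Filter Y)) := Filter.map_mono hprod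
        _ = 𝔶 := Filter.map_snd_prod _ _
    have hxi : xi (Ultrafilter.map (fun p : X × Y => r p.1 p.2) 𝔴) ≤ d := by
      rw [xi]
      apply iSup₂_le; intro C hC
      apply ENNReal.le_of_forall_pos_le_add
      intro ε hε _
      have hTε : T (↑ε) ∈ 𝔴 := by
        apply hle.trans inf_le_right
        exact hLbasis.mem_of_mem (by simpa using ENNReal.coe_pos.mpr hε)
      have hpre : (fun p : X × Y => r p.1 p.2) ⁻¹' C ∈ 𝔴 := hC
      obtain ⟨p, hp1, hp2⟩ := 𝔴.nonempty_of_mem (Filter.inter_mem hpre hTε)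
      exact le_trans (iInf₂_le (r p.1 p.2) hp1) hp2
    exact le_trans (sInf_le ⟨𝔴, hfst, hsnd, rfl⟩) hxi


end
end

section
/- For every u ∈ ℝ≥0∞ and every numerical relation r : X ⇸ Y one has Ū (u ⊙ r) = u ⊙ (Ū r), i.e. for all 𝔵 ∈ U X and 𝔶 ∈ U Y, ⨆_{A ∈ 𝔵} ⨆_{B ∈ 𝔶} ⨅_{x ∈ A} ⨅_{y ∈ B} max u (r x y) = max u (Ū r (𝔵, 𝔶)). -/
open scoped ENNReal
open CategoryTheory

noncomputable section

/-- `Ū (u ⊙ r) = u ⊙ (Ū r)` for every `u ∈ [0,∞]` and every numerical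
relation `r : X ⇸ Y`. -/
theorem uExt_maxact (X Y : Type*) (u : ℝ≥0∞) (r : X → Y → ℝ≥0∞)
    (𝔵 : Ultrafilter X) (𝔶 : Ultrafilter Y) :
    uExt (fun x y => max u (r x y)) 𝔵 𝔶 = max u (uExt r 𝔵 𝔶) := by
  have key : ∀ (A : Set X) (B : Set Y),
      (⨅ x ∈ A, ⨅ y ∈ B, max u (r x y)) = u ⊔ ⨅ x ∈ A, ⨅ y ∈ B, r x y := by
    intro A B
    simp only [sup_iInf_eq]
  simp only [uExt, key]
  rw [show ∀ c : Set X → Set Y → ℝ≥0∞, (⨆ A ∈ 𝔵, ⨆ B ∈ 𝔶, (u ⊔ c A B))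
      = u ⊔ ⨆ A ∈ 𝔵, ⨆ B ∈ 𝔶, c A B from fun c => by
    simp only [sup_biSup (⟨Set.univ, 𝔶.univ_mem⟩ : ∃ B, B ∈ 𝔶),
      sup_biSup (⟨Set.univ, 𝔵.univ_mem⟩ : ∃ A, A ∈ 𝔵)]]

end
end

section
/- The extension Ū is functorial on numerical relations: for all numerical relations r : X ⇸ Y and s : Y ⇸ Z, Ū(s · r) = (Ū s) · (Ū r), i.e. for all 𝔵 ∈ U X and 𝔷 ∈ U Z, Ū(s · r)(𝔵, 𝔷) = ⨅_{𝔶 ∈ U Y} ( Ū r (𝔵, 𝔶) + Ū s (𝔶, 𝔷) ). -/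
open scoped ENNReal
open CategoryTheory

noncomputable section

section AuxUExt
open Filter Set
variable {X Y Z : Type*} (r : X → Y → ℝ≥0∞) (s : Y → Z → ℝ≥0∞)

-- Easy direction
private theorem uExt_aux_dir1 (𝔵 : Ultrafilter X) (𝔷 : Ultrafilter Z) (𝔶 : Ultrafilter Y) :
    (⨆ A ∈ 𝔵, ⨆ C ∈ 𝔷, ⨅ x ∈ A, ⨅ z ∈ C, ⨅ y : Y, (r x y + s y z)) ≤
      (⨆ A ∈ 𝔵, ⨆ B ∈ 𝔶, ⨅ x ∈ A, ⨅ y ∈ B, r x y)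
        + (⨆ B ∈ 𝔶, ⨆ C ∈ 𝔷, ⨅ y ∈ B, ⨅ z ∈ C, s y z) := by
  set α := ⨆ A ∈ 𝔵, ⨆ B ∈ 𝔶, ⨅ x ∈ A, ⨅ y ∈ B, r x y with hα
  set β := ⨆ B ∈ 𝔶, ⨆ C ∈ 𝔷, ⨅ y ∈ B, ⨅ z ∈ C, s y z with hβ
  refine iSup₂_le fun A hA => iSup₂_le fun C hC => ?_
  refine ENNReal.le_of_forall_pos_le_add fun ε hε hfin => ?_
  have hαt : α < ⊤ := lt_of_le_of_lt le_self_add hfin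
  have hβt : β < ⊤ := lt_of_le_of_lt le_add_self hfin
  have hε2 : ((ε : ℝ≥0∞) / 2) ≠ 0 :=
    (ENNReal.half_pos (by exact_mod_cast hε.ne')).ne'
  have hB₁ : {y | ∃ x ∈ A, r x y ≤ α + ε / 2} ∈ 𝔶 := by
    by_contra h
    have hc : {y | ∃ x ∈ A, r x y ≤ α + ε / 2}ᶜ ∈ 𝔶 :=
      (Ultrafilter.compl_mem_iff_notMem).2 h
    have h1 : α + ε / 2 ≤ ⨅ x ∈ A, ⨅ y ∈ {y | ∃ x ∈ A, r x y ≤ α + ε / 2}ᶜ, r x y := by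
      refine le_iInf₂ fun x hx => le_iInf₂ fun y hy => ?_
      by_contra hlt
      exact hy ⟨x, hx, le_of_not_ge (fun h' => hlt h')⟩
    have h2 : (⨅ x ∈ A, ⨅ y ∈ {y | ∃ x ∈ A, r x y ≤ α + ε / 2}ᶜ, r x y) ≤ α :=
      le_iSup₂_of_le A hA (le_iSup₂_of_le _ hc le_rfl)
    exact absurd (h1.trans h2) (not_le.2 (ENNReal.lt_add_right hαt.ne hε2))
  have hB₂ : {y | ∃ z ∈ C, s y z ≤ β + ε / 2} ∈ 𝔶 := by
    by_contra h
    have hc : {y | ∃ z ∈ C, s y z ≤ β + ε / 2}ᶜ ∈ 𝔶 :=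
      (Ultrafilter.compl_mem_iff_notMem).2 h
    have h1 : β + ε / 2 ≤ ⨅ y ∈ {y | ∃ z ∈ C, s y z ≤ β + ε / 2}ᶜ, ⨅ z ∈ C, s y z := by
      refine le_iInf₂ fun y hy => le_iInf₂ fun z hz => ?_
      by_contra hlt
      exact hy ⟨z, hz, le_of_not_ge (fun h' => hlt h')⟩
    have h2 : (⨅ y ∈ {y | ∃ z ∈ C, s y z ≤ β + ε / 2}ᶜ, ⨅ z ∈ C, s y z) ≤ β :=
      le_iSup₂_of_le _ hc (le_iSup₂_of_le C hC le_rfl)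
    exact absurd (h1.trans h2) (not_le.2 (ENNReal.lt_add_right hβt.ne hε2))
  obtain ⟨y, hy₁, hy₂⟩ := Ultrafilter.nonempty_of_mem (inter_mem hB₁ hB₂)
  obtain ⟨x, hx, hrx⟩ := hy₁
  obtain ⟨z, hz, hsz⟩ := hy₂
  calc (⨅ x ∈ A, ⨅ z ∈ C, ⨅ y : Y, (r x y + s y z))
      ≤ ⨅ z ∈ C, ⨅ y : Y, (r x y + s y z) := iInf₂_le x hx
    _ ≤ ⨅ y : Y, (r x y + s y z) := iInf₂_le z hz
    _ ≤ r x y + s y z := iInf_le _ y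
    _ ≤ (α + ε / 2) + (β + ε / 2) := add_le_add hrx hsz
    _ = α + β + ((ε : ℝ≥0∞) / 2 + ε / 2) := by ring
    _ = α + β + ε := by rw [ENNReal.add_halves]

variable {X Y Z : Type*} (r : X → Y → ℝ≥0∞) (s : Y → Z → ℝ≥0∞)

private theorem uExt_aux_dir2 (𝔵 : Ultrafilter X) (𝔷 : Ultrafilter Z) (d : ℝ≥0∞) (hd : d ≠ ⊤)
    (hle : ∀ A ∈ 𝔵, ∀ C ∈ 𝔷, (⨅ x ∈ A, ⨅ z ∈ C, ⨅ y : Y, (r x y + s y z)) ≤ d) :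
    (⨅ 𝔶 : Ultrafilter Y, ((⨆ A ∈ 𝔵, ⨆ B ∈ 𝔶, ⨅ x ∈ A, ⨅ y ∈ B, r x y)
        + (⨆ B ∈ 𝔶, ⨆ C ∈ 𝔷, ⨅ y ∈ B, ⨅ z ∈ C, s y z))) ≤ d := by
  set D : Set X → Set Z → ℝ≥0∞ → Set Y :=
    fun A C ε => {y | (⨅ x ∈ A, r x y) + (⨅ z ∈ C, s y z) ≤ d + ε} with hD
  have hDne : ∀ A ∈ 𝔵, ∀ C ∈ 𝔷, ∀ ε : ℝ≥0∞, ε ≠ 0 → (D A C ε).Nonempty := by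
    intro A hA C hC ε hε
    have h2 : (⨅ x ∈ A, ⨅ z ∈ C, ⨅ y : Y, (r x y + s y z)) < d + ε :=
      (hle A hA C hC).trans_lt (ENNReal.lt_add_right hd hε)
    simp only [iInf_lt_iff] at h2
    obtain ⟨x, hx, z, hz, y, hy⟩ := h2
    refine ⟨y, ?_⟩
    have hr : (⨅ x' ∈ A, r x' y) ≤ r x y := iInf₂_le x hx
    have hs : (⨅ z' ∈ C, s y z') ≤ s y z := iInf₂_le z hz
    exact le_of_lt (lt_of_le_of_lt (add_le_add hr hs) hy)
  let ι := {p : Set X × Set Z × ℝ≥0∞ // p.1 ∈ 𝔵 ∧ p.2.1 ∈ 𝔷 ∧ p.2.2 ≠ 0}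
  have hι : Nonempty ι := ⟨⟨(univ, univ, 1), univ_mem, univ_mem, one_ne_zero⟩⟩
  let f : ι → Filter Y := fun i => 𝓟 (D i.1.1 i.1.2.1 i.1.2.2)
  have hdir : Directed (· ≥ ·) f := by
    rintro ⟨⟨A, C, ε⟩, hA, hC, hε⟩ ⟨⟨A', C', ε'⟩, hA', hC', hε'⟩
    refine ⟨⟨(A ∩ A', C ∩ C', min ε ε'), inter_mem hA hA', inter_mem hC hC',
      (lt_min (pos_iff_ne_zero.2 hε) (pos_iff_ne_zero.2 hε')).ne'⟩, ?_, ?_⟩ <;>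
    · refine principal_mono.2 fun y hy => ?_
      simp only [hD, mem_setOf_eq] at hy ⊢
      refine le_trans (add_le_add (biInf_mono ?_) (biInf_mono ?_))
        (hy.trans (add_le_add_right ?_ _)) <;>
        first
          | exact fun _ h => h.1
          | exact fun _ h => h.2
          | exact min_le_left _ _
          | exact min_le_right _ _
  have hFne : (⨅ i, f i).NeBot :=
    iInf_neBot_of_directed' hdir fun i =>
      principal_neBot_iff.2 (hDne _ i.2.1 _ i.2.2.1 _ i.2.2.2)
  let 𝔶 : Ultrafilter Y := @Ultrafilter.of _ _ hFne
  have hmem : ∀ A ∈ 𝔵, ∀ C ∈ 𝔷, ∀ ε : ℝ≥0∞, ε ≠ 0 → D A C ε ∈ 𝔶 := by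
    intro A hA C hC ε hε
    have h1 : D A C ε ∈ ⨅ i, f i :=
      mem_iInf_of_mem (⟨(A, C, ε), hA, hC, hε⟩ : ι) (mem_principal_self _)
    exact (@Ultrafilter.of_le _ _ hFne) h1
  have key : ∀ A ∈ 𝔵, ∀ B ∈ 𝔶, ∀ C ∈ 𝔷,
      (⨅ x ∈ A, ⨅ y ∈ B, r x y) + (⨅ y ∈ B, ⨅ z ∈ C, s y z) ≤ d := by
    intro A hA B hB C hC
    refine ENNReal.le_of_forall_pos_le_add fun ε hε _ => ?_
    have hε' : (ε : ℝ≥0∞) ≠ 0 := by exact_mod_cast hε.ne'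
    obtain ⟨y, hyB, hyD⟩ := Ultrafilter.nonempty_of_mem (inter_mem hB (hmem A hA C hC ε hε'))
    have h1 : (⨅ x ∈ A, ⨅ y ∈ B, r x y) ≤ ⨅ x ∈ A, r x y :=
      iInf₂_mono fun x _ => iInf₂_le y hyB
    have h2 : (⨅ y ∈ B, ⨅ z ∈ C, s y z) ≤ ⨅ z ∈ C, s y z := iInf₂_le y hyB
    exact le_trans (add_le_add h1 h2) hyD
  refine iInf_le_of_le 𝔶 ?_
  refine ENNReal.biSup_add_biSup_le' (p := (· ∈ 𝔵)) (q := (· ∈ 𝔶))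
    ⟨univ, univ_mem⟩ ⟨univ, univ_mem⟩ fun A hA B₀ hB₀ => ?_
  refine ENNReal.biSup_add_biSup_le' (p := (· ∈ 𝔶)) (q := (· ∈ 𝔷))
    ⟨univ, univ_mem⟩ ⟨univ, univ_mem⟩ fun B hB C hC => ?_
  have hBB : B ∩ B₀ ∈ 𝔶 := inter_mem hB hB₀
  refine le_trans (add_le_add ?_ ?_) (key A hA (B ∩ B₀) hBB C hC)
  · exact iInf₂_mono fun x _ => biInf_mono fun _ h => h.1
  · exact biInf_mono fun _ h => h.2
end AuxUExt

/-- The extension `Ū` is functorial on numerical relations: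
`Ū (s · r) = (Ū s) · (Ū r)` for all `r : X ⇸ Y` and `s : Y ⇸ Z`. -/
theorem uExt_comp (X Y Z : Type*) (r : X → Y → ℝ≥0∞) (s : Y → Z → ℝ≥0∞)
    (𝔵 : Ultrafilter X) (𝔷 : Ultrafilter Z) :
    uExt (fun x z => ⨅ y : Y, (r x y + s y z)) 𝔵 𝔷 =
      ⨅ 𝔶 : Ultrafilter Y, (uExt r 𝔵 𝔶 + uExt s 𝔶 𝔷) := by
  simp only [uExt]
  apply le_antisymm
  · exact le_iInf fun 𝔶 => uExt_aux_dir1 r s 𝔵 𝔷 𝔶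
  · by_cases hd : (⨆ A ∈ 𝔵, ⨆ C ∈ 𝔷, ⨅ x ∈ A, ⨅ z ∈ C, ⨅ y : Y, (r x y + s y z)) = ⊤
    · rw [hd]; exact le_top
    · exact uExt_aux_dir2 r s 𝔵 𝔷 _ hd fun A hA C hC =>
        le_iSup₂_of_le A hA (le_iSup₂_of_le C hC le_rfl)

end
end

section
/- Let δ be an approach distance on X and let a : U X ⇸ X be its ultrafilter convergence, a 𝔵 x = ⨆_{A ∈ 𝔵} δ A x. Then (1) a is reflexive: a (e_X x) x = 0 for all x ∈ X; (2) a is transitive: Ū a 𝔛 𝔵 + a 𝔵 x ≥ a (m_X 𝔛) x for all 𝔛 ∈ U(U X), 𝔵 ∈ U X, x ∈ X; and (3) δ is recovered from a: δ A x = ⨅_{𝔵 ∈ U X, A ∈ 𝔵} a 𝔵 x for all A ⊆ X and x ∈ X. -/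
open scoped ENNReal
open CategoryTheory

noncomputable section

/-- An approach distance is antitone in the set argument. -/
lemma IsApproachDistance.anti {X : Type*} {δ : Set X → X → ℝ≥0∞}
    (hδ : IsApproachDistance δ) {S T : Set X} (h : S ⊆ T) (x : X) : δ T x ≤ δ S x := by
  calc δ T x = min (δ S x) (δ T x) := by
        rw [← hδ.dist_union, Set.union_eq_self_of_subset_left h]
    _ ≤ δ S x := min_le_left _ _

/-- The ultrafilter convergence `a 𝔵 x = ⨆_{A ∈ 𝔵} δ A x` of an approach
distance `δ` is reflexive and transitive, and `δ` is recovered from `a` by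
`δ A x = ⨅_{𝔵 ∈ U X, A ∈ 𝔵} a 𝔵 x`. -/
theorem appConv_reflexive_transitive_recovers (X : Type*) (δ : Set X → X → ℝ≥0∞)
    (hδ : IsApproachDistance δ)
    (a : Ultrafilter X → X → ℝ≥0∞)
    (ha : ∀ (𝔵 : Ultrafilter X) (x : X), a 𝔵 x = ⨆ A ∈ 𝔵, δ A x) :
    (∀ x : X, a (pure x : Ultrafilter X) x = 0) ∧
    (∀ (𝔛 : Ultrafilter (Ultrafilter X)) (𝔵 : Ultrafilter X) (x : X),
      a (mU 𝔛) x ≤ uExt a 𝔛 𝔵 + a 𝔵 x) ∧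
    (∀ (A : Set X) (x : X), δ A x = ⨅ (𝔵 : Ultrafilter X) (_ : A ∈ 𝔵), a 𝔵 x) := by
  refine ⟨?_, ?_, ?_⟩
  · -- reflexivity
    intro x
    rw [ha]
    refine le_antisymm (iSup₂_le fun A hA => ?_) zero_le
    have hx : ({x} : Set X) ⊆ A := Set.singleton_subset_iff.mpr (Ultrafilter.mem_pure.mp hA)
    calc δ A x ≤ δ {x} x := hδ.anti hx x
      _ = 0 := hδ.dist_singleton x
  · -- transitivity
    intro 𝔛 𝔵 x
    set u := uExt a 𝔛 𝔵 with hu_def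
    set v := a 𝔵 x with hv_def
    rw [ha]
    refine iSup₂_le fun A hA => ?_
    have h𝒜 : {𝔞 : Ultrafilter X | A ∈ 𝔞} ∈ 𝔛 := by
      have : A ∈ Filter.bind (↑𝔛) (fun x : Ultrafilter X => ↑x) := hA
      rwa [Filter.mem_bind'] at this
    -- key step: for every ε' > u, δ A x ≤ v + ε'
    have key : ∀ ε' : ℝ≥0∞, u < ε' → δ A x ≤ v + ε' := by
      intro ε' hε'
      have hAε : {y | δ A y ≤ ε'} ∈ 𝔵 := by
        by_contra hc
        have hcompl : {y | δ A y ≤ ε'}ᶜ ∈ 𝔵 := (Ultrafilter.compl_mem_iff_notMem).mpr hc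
        have hle : (⨅ 𝔞 ∈ {𝔞 : Ultrafilter X | A ∈ 𝔞}, ⨅ y ∈ {y | δ A y ≤ ε'}ᶜ, a 𝔞 y) ≤ u := by
          rw [hu_def, uExt]
          exact le_iSup₂_of_le {𝔞 : Ultrafilter X | A ∈ 𝔞} h𝒜
            (le_iSup₂_of_le {y | δ A y ≤ ε'}ᶜ hcompl le_rfl)
        have hlt := lt_of_le_of_lt hle hε'
        simp only [iInf_lt_iff] at hlt
        obtain ⟨𝔞, h𝔞mem, y, hy, h4⟩ := hlt
        have hδy : δ A y ≤ a 𝔞 y := by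
          rw [ha]; exact le_iSup₂_of_le A h𝔞mem le_rfl
        exact hy (le_of_lt (lt_of_le_of_lt hδy h4))
      have h1 : δ A x ≤ δ {y | δ A y ≤ ε'} x + ε' := hδ.dist_closure A x ε'
      have h2 : δ {y | δ A y ≤ ε'} x ≤ v := by
        rw [hv_def, ha]; exact le_iSup₂_of_le _ hAε le_rfl
      calc δ A x ≤ δ {y | δ A y ≤ ε'} x + ε' := h1
        _ ≤ v + ε' := add_le_add h2 le_rfl
    rcases eq_top_or_lt_top u with hu | hu
    · rw [hu, top_add]; exact le_top
    rcases eq_top_or_lt_top v with hv | hv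
    · rw [hv, add_top]; exact le_top
    refine ENNReal.le_of_forall_pos_le_add fun ε hε _ => ?_
    have hlt : u < u + ε := ENNReal.lt_add_right hu.ne (by exact_mod_cast hε.ne')
    calc δ A x ≤ v + (u + ε) := key _ hlt
      _ = u + v + ε := by ring
  · -- recovery
    intro A x
    refine le_antisymm (le_iInf₂ fun 𝔵 hA => ?_) ?_
    · rw [ha]; exact le_iSup₂_of_le A hA le_rfl
    · rcases eq_top_or_lt_top (δ A x) with hc | hc
      · rw [hc]; exact le_top
      -- build a filter whose sets contain A \ B for some "far" B
      set g : Filter X :=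
        { sets := {S | ∃ B : Set X, δ A x < δ (A ∩ B) x ∧ A \ B ⊆ S}
          univ_sets := ⟨∅, by rw [Set.inter_empty, hδ.dist_empty]; exact hc, Set.subset_univ _⟩
          sets_of_superset := fun ⟨B, hB, hsub⟩ hST => ⟨B, hB, hsub.trans hST⟩
          inter_sets := by
            rintro S T ⟨B₁, hB₁, hsub₁⟩ ⟨B₂, hB₂, hsub₂⟩
            refine ⟨B₁ ∪ B₂, ?_, ?_⟩
            · rw [Set.inter_union_distrib_left, hδ.dist_union]
              exact lt_min hB₁ hB₂
            · rw [← Set.diff_inter_diff]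
              exact Set.inter_subset_inter hsub₁ hsub₂ } with hg_def
      have hg_ne : g.NeBot := by
        rw [Filter.neBot_iff]
        intro hbot
        have hempty : (∅ : Set X) ∈ g := by rw [hbot]; exact Filter.mem_bot
        obtain ⟨B, hB, hsub⟩ := hempty
        have hAB : A ∩ B = A := Set.inter_eq_left.mpr (Set.diff_eq_empty.mp
          (Set.subset_empty_iff.mp hsub))
        rw [hAB] at hB
        exact lt_irrefl _ hB
      set 𝔵 : Ultrafilter X := Ultrafilter.of g with h𝔵
      have hle : (↑𝔵 : Filter X) ≤ g := Ultrafilter.of_le g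
      have hA𝔵 : A ∈ 𝔵 := hle ⟨∅, by rw [Set.inter_empty, hδ.dist_empty]; exact hc,
        by rw [Set.diff_empty]⟩
      refine iInf₂_le_of_le 𝔵 hA𝔵 ?_
      rw [ha]
      refine iSup₂_le fun S hS => ?_
      by_contra h'
      push_neg at h'
      have hfar : δ A x < δ (A ∩ S) x := lt_of_lt_of_le h' (hδ.anti Set.inter_subset_right x)
      have hSc : Sᶜ ∈ 𝔵 := hle ⟨S, hfar, fun y hy => hy.2⟩
      exact (Ultrafilter.compl_mem_iff_notMem.mp hSc) hS


end
end
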